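/- arXiv:1409.8428 — 9 statements merged into one kernel-verified Lean document; each statement's English description precedes it below -/
import Mathlib

section
/- Let G = (V,D) be a directed graph on vertex set V = {1,...,K}, and let p be any probability distribution on V. Then the sum over all vertices i of p_i / (p_i + Σ_{j : (j,i) ∈ D} p_j) is at most mas(G), the maximum number of vertices of an induced acyclic subgraph of G. -/
open scoped BigOperators

/-- A sequence of at least one arc inside `S` never returns to its starting
vertex: the subgraph induced by `S` has no directed cycles. -/
def AcyclicOn {V : Type*} (D : V → V → Prop) (S : Finset V) : Prop :=
  ∀ (n : ℕ) (f : Fin (n + 2) → V), (∀ k, f k ∈ S) →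
    (∀ k : Fin (n + 1), D (f k.castSucc) (f k.succ)) → f 0 ≠ f (Fin.last (n + 1))

/-- `mas D` : the maximum number of vertices of an induced acyclic subgraph. -/
noncomputable def mas {V : Type*} [Fintype V] (D : V → V → Prop) : ℕ :=
  sSup {n | ∃ S : Finset V, S.card = n ∧ AcyclicOn D S}

section Aux

variable {K : ℕ}

def Nin (D : Fin K → Fin K → Prop) [DecidableRel D] (i : Fin K) : Finset (Fin K) :=
  Finset.univ.filter (fun j => D j i)

noncomputable def fF (D : Fin K → Fin K → Prop) [DecidableRel D] (p : Fin K → ℝ)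
    (s : Finset (Fin K)) : ℝ :=
  ∑ x ∈ s.attach, (p x.1 / ∑ y ∈ s, p y) *
    ((if Nin D x.1 ⊆ s then (1:ℝ) else 0) + fF D p (s.erase x.1))
termination_by s.card
decreasing_by exact Finset.card_erase_lt_of_mem x.2

lemma fF_eq (D : Fin K → Fin K → Prop) [DecidableRel D] (p : Fin K → ℝ) (s : Finset (Fin K)) :
    fF D p s = ∑ x ∈ s, (p x / ∑ y ∈ s, p y) *
      ((if Nin D x ⊆ s then (1:ℝ) else 0) + fF D p (s.erase x)) := by
  rw [fF]
  exact Finset.sum_attach s (fun x => (p x / ∑ y ∈ s, p y) *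
      ((if Nin D x ⊆ s then (1:ℝ) else 0) + fF D p (s.erase x)))

lemma fF_empty (D : Fin K → Fin K → Prop) [DecidableRel D] (p : Fin K → ℝ) :
    fF D p (∅ : Finset (Fin K)) = 0 := by
  rw [fF_eq]; simp

lemma card_le_mas (D : Fin K → Fin K → Prop) (g : Finset (Fin K)) (hg : AcyclicOn D g) :
    g.card ≤ mas D := by
  apply le_csSup
  · exact ⟨Fintype.card (Fin K), fun n hn => by
      obtain ⟨S, rfl, -⟩ := hn
      simpa using S.card_le_univ⟩
  · exact ⟨g, rfl, hg⟩

lemma acyclicOn_insert (D : Fin K → Fin K → Prop) (g : Finset (Fin K)) (x : Fin K)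
    (hxg : x ∉ g) (hno : ∀ y ∈ insert x g, ¬ D y x) (hg : AcyclicOn D g) :
    AcyclicOn D (insert x g) := by
  intro n f hmem harc
  have hsucc : ∀ j : Fin (n + 1), f j.succ ∈ g := by
    intro j
    rcases Finset.mem_insert.1 (hmem j.succ) with h | h
    · exact absurd (h ▸ harc j) (hno _ (hmem j.castSucc))
    · exact h
  have hlast : f (Fin.last (n + 1)) ∈ g := by
    rw [← Fin.succ_last]
    exact hsucc (Fin.last n)
  rcases Finset.mem_insert.1 (hmem 0) with h0 | h0
  · intro heq
    rw [h0] at heq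
    exact hxg (heq ▸ hlast)
  · refine hg n f ?_ harc
    intro k
    induction k using Fin.cases with
    | zero => exact h0
    | succ j => exact hsucc j

variable (D : Fin K → Fin K → Prop) [DecidableRel D] (p : Fin K → ℝ)

lemma sum_pos_of_nonempty (hpos : ∀ i, 0 < p i) {s : Finset (Fin K)} (hs : s.Nonempty) :
    0 < ∑ y ∈ s, p y :=
  Finset.sum_pos (fun i _ => hpos i) hs

lemma upper (hirr : ∀ i, ¬ D i i) (hpos : ∀ i, 0 < p i) :
    ∀ (n : ℕ) (s : Finset (Fin K)), s.card ≤ n → ∀ g : Finset (Fin K),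
      Disjoint g s → AcyclicOn D g → (g.card : ℝ) + fF D p s ≤ (mas D : ℝ) := by
  intro n
  induction n with
  | zero =>
    intro s hs g hdisj hg
    have : s = ∅ := Finset.card_eq_zero.1 (Nat.le_zero.1 hs)
    subst this
    rw [fF_empty]
    have := card_le_mas D g hg
    simp only [add_zero]
    exact_mod_cast this
  | succ n ih =>
    intro s hs g hdisj hg
    rcases s.eq_empty_or_nonempty with rfl | hne
    · rw [fF_empty]
      have := card_le_mas D g hg
      simp only [add_zero]
      exact_mod_cast this
    have hT : 0 < ∑ y ∈ s, p y := sum_pos_of_nonempty p hpos hne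
    have hbound : ∀ x ∈ s,
        (if Nin D x ⊆ s then (1:ℝ) else 0) + fF D p (s.erase x) ≤ (mas D : ℝ) - g.card := by
      intro x hx
      have hcard : (s.erase x).card ≤ n := by
        have := Finset.card_erase_of_mem hx
        omega
      by_cases hN : Nin D x ⊆ s
      · have hxg : x ∉ g := fun h => (Finset.disjoint_left.1 hdisj h) hx
        have hno : ∀ y ∈ insert x g, ¬ D y x := by
          intro y hy hD
          rcases Finset.mem_insert.1 hy with rfl | hyg
          · exact hirr y hD
          · have : y ∈ s := hN (by simp [Nin, hD])
            exact (Finset.disjoint_left.1 hdisj hyg) this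
        have hg' : AcyclicOn D (insert x g) := acyclicOn_insert D g x hxg hno hg
        have hdisj' : Disjoint (insert x g) (s.erase x) := by
          rw [Finset.disjoint_left]
          intro a ha ha'
          rcases Finset.mem_insert.1 ha with rfl | hag
          · exact (Finset.notMem_erase a s) ha'
          · exact (Finset.disjoint_left.1 hdisj hag) (Finset.erase_subset x s ha')
        have := ih (s.erase x) hcard (insert x g) hdisj' hg'
        rw [Finset.card_insert_of_notMem hxg] at this
        push_cast at this ⊢
        rw [if_pos hN]
        linarith
      · rw [if_neg hN, zero_add]
        have hdisj' : Disjoint g (s.erase x) :=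
          hdisj.mono_right (Finset.erase_subset x s)
        have := ih (s.erase x) hcard g hdisj' hg
        linarith
    have hstep : fF D p s ≤ ∑ x ∈ s, (p x / ∑ y ∈ s, p y) * ((mas D : ℝ) - g.card) := by
      rw [fF_eq]
      refine Finset.sum_le_sum fun x hx => ?_
      exact mul_le_mul_of_nonneg_left (hbound x hx)
        (div_nonneg (hpos x).le hT.le)
    rw [← Finset.sum_mul, ← Finset.sum_div, div_self hT.ne', one_mul] at hstep
    linarith

noncomputable def Lf (s : Finset (Fin K)) : ℝ :=
  ∑ i ∈ s, (if Nin D i ⊆ s then p i / (p i + ∑ j ∈ Nin D i, p j) else 0)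

lemma key_identity (hirr : ∀ i, ¬ D i i) (hpos : ∀ i, 0 < p i) (s : Finset (Fin K)) :
    ∑ x ∈ s, p x * ((if Nin D x ⊆ s then (1:ℝ) else 0) + Lf D p (s.erase x))
      = (∑ y ∈ s, p y) * Lf D p s := by
  have hinner : ∀ i ∈ s,
      (∑ x ∈ s, if i ≠ x then p x * (if Nin D i ⊆ s.erase x
          then p i / (p i + ∑ j ∈ Nin D i, p j) else 0) else 0)
        = if Nin D i ⊆ s then
            (p i / (p i + ∑ j ∈ Nin D i, p j)) * ((∑ y ∈ s, p y) - p i - ∑ j ∈ Nin D i, p j)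
          else 0 := by
    intro i hi
    by_cases hN : Nin D i ⊆ s
    · rw [if_pos hN]
      have hiN : i ∉ Nin D i := by simp [Nin, hirr i]
      have hsub : insert i (Nin D i) ⊆ s := Finset.insert_subset hi hN
      have step : ∀ x ∈ s,
          (if i ≠ x then p x * (if Nin D i ⊆ s.erase x
              then p i / (p i + ∑ j ∈ Nin D i, p j) else 0) else 0)
            = if x ∉ insert i (Nin D i) then p x * (p i / (p i + ∑ j ∈ Nin D i, p j)) else 0 := by
        intro x hx
        by_cases hxi : i = x
        · subst hxi
          simp
        · rw [if_pos hxi]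
          have : Nin D i ⊆ s.erase x ↔ x ∉ Nin D i := by
            rw [Finset.subset_erase]
            exact ⟨fun h => h.2, fun h => ⟨hN, h⟩⟩
          by_cases hxN : x ∈ Nin D i
          · rw [if_neg (by rw [this]; exact fun h => h hxN), mul_zero,
              if_neg (by simp [hxN])]
          · rw [if_pos (this.2 hxN), if_pos (by simp [hxN, Ne.symm hxi])]
      rw [Finset.sum_congr rfl step]
      rw [← Finset.sum_filter]
      have hfilter : s.filter (fun x => x ∉ insert i (Nin D i)) = s \ insert i (Nin D i) := by
        rw [Finset.sdiff_eq_filter]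
      rw [hfilter, ← Finset.sum_mul, Finset.sum_sdiff_eq_sub hsub,
        Finset.sum_insert hiN]
      ring
    · rw [if_neg hN]
      refine Finset.sum_eq_zero fun x hx => ?_
      by_cases hxi : i = x
      · rw [if_neg (by simp [hxi])]
      · rw [if_pos hxi, if_neg (fun h => hN (h.trans (Finset.erase_subset x s))), mul_zero]
  -- expand the left-hand side
  have expand : ∀ x ∈ s, p x * ((if Nin D x ⊆ s then (1:ℝ) else 0) + Lf D p (s.erase x))
      = p x * (if Nin D x ⊆ s then (1:ℝ) else 0)
        + ∑ i ∈ s, (if i ≠ x then p x * (if Nin D i ⊆ s.erase x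
            then p i / (p i + ∑ j ∈ Nin D i, p j) else 0) else 0) := by
    intro x hx
    rw [mul_add]
    congr 1
    unfold Lf
    rw [Finset.mul_sum]
    rw [← Finset.sum_filter]
    have : s.filter (fun i => i ≠ x) = s.erase x := Finset.filter_ne' s x
    rw [← this]
  rw [Finset.sum_congr rfl expand, Finset.sum_add_distrib]
  rw [Finset.sum_comm]
  rw [Finset.sum_congr rfl hinner]
  unfold Lf
  rw [Finset.mul_sum]
  rw [← Finset.sum_add_distrib]
  refine Finset.sum_congr rfl fun i hi => ?_
  by_cases hN : Nin D i ⊆ s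
  · rw [if_pos hN, if_pos hN, if_pos hN, mul_one]
    have hden : p i + ∑ j ∈ Nin D i, p j ≠ 0 := by
      have : (0:ℝ) ≤ ∑ j ∈ Nin D i, p j := Finset.sum_nonneg fun j _ => (hpos j).le
      nlinarith [hpos i]
    field_simp
    ring
  · rw [if_neg hN, if_neg hN, if_neg hN]
    ring

lemma lower (hirr : ∀ i, ¬ D i i) (hpos : ∀ i, 0 < p i) :
    ∀ (n : ℕ) (s : Finset (Fin K)), s.card ≤ n → Lf D p s ≤ fF D p s := by
  intro n
  induction n with
  | zero =>
    intro s hs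
    have : s = ∅ := Finset.card_eq_zero.1 (Nat.le_zero.1 hs)
    subst this
    rw [fF_empty]
    unfold Lf
    simp
  | succ n ih =>
    intro s hs
    rcases s.eq_empty_or_nonempty with rfl | hne
    · rw [fF_empty]; unfold Lf; simp
    have hT : 0 < ∑ y ∈ s, p y := sum_pos_of_nonempty p hpos hne
    have hstep : ∑ x ∈ s, (p x / ∑ y ∈ s, p y) *
        ((if Nin D x ⊆ s then (1:ℝ) else 0) + Lf D p (s.erase x)) ≤ fF D p s := by
      rw [fF_eq]
      refine Finset.sum_le_sum fun x hx => ?_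
      have hcard : (s.erase x).card ≤ n := by
        have := Finset.card_erase_of_mem hx
        omega
      have := ih (s.erase x) hcard
      have hw : 0 ≤ p x / ∑ y ∈ s, p y := div_nonneg (hpos x).le hT.le
      apply mul_le_mul_of_nonneg_left _ hw
      linarith
    calc Lf D p s = (∑ x ∈ s, p x * ((if Nin D x ⊆ s then (1:ℝ) else 0)
          + Lf D p (s.erase x))) / (∑ y ∈ s, p y) := by
          rw [key_identity D p hirr hpos s, mul_comm, mul_div_assoc, div_self hT.ne', mul_one]
      _ = ∑ x ∈ s, (p x / ∑ y ∈ s, p y) *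
          ((if Nin D x ⊆ s then (1:ℝ) else 0) + Lf D p (s.erase x)) := by
          rw [Finset.sum_div]
          exact Finset.sum_congr rfl fun x hx => by ring
      _ ≤ fF D p s := hstep

end Aux

/-- For any directed graph `D` (no self-loops) on `{1,…,K}` and any probability
distribution `p`, `∑_i p_i / (p_i + ∑_{j : (j,i) ∈ D} p_j) ≤ mas(G)`. -/
theorem stmt1 (K : ℕ) (D : Fin K → Fin K → Prop) [DecidableRel D]
    (hirr : ∀ i, ¬ D i i)
    (p : Fin K → ℝ) (hpos : ∀ i, 0 < p i) (hsum : ∑ i, p i = 1) :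
    ∑ i : Fin K, p i / (p i + ∑ j ∈ Finset.univ.filter (fun j => D j i), p j)
      ≤ (mas D : ℝ) := by
  have h1 : ∑ i : Fin K, p i / (p i + ∑ j ∈ Finset.univ.filter (fun j => D j i), p j)
      = Lf D p Finset.univ := by
    unfold Lf
    refine Finset.sum_congr rfl fun i _ => ?_
    rw [if_pos (Finset.subset_univ _)]
    rfl
  have h2 : Lf D p Finset.univ ≤ fF D p Finset.univ :=
    lower D p hirr hpos (Finset.univ.card) Finset.univ le_rfl
  have hacy : AcyclicOn D (∅ : Finset (Fin K)) := by
    intro n f hmem _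
    exact absurd (hmem 0) (by simp)
  have h3 := upper D p hirr hpos (Finset.univ.card) Finset.univ le_rfl ∅
    (Finset.disjoint_left.2 (by simp)) hacy
  simp only [Finset.card_empty, Nat.cast_zero, zero_add] at h3
  rw [h1]
  linarith
end

section
/- Let G = (V,D) be a directed graph on K vertices with in-degrees d_1^-, ..., d_K^-, and let α = α(G) be the independence number of the underlying undirected graph. Then Σ_{i=1}^K 1/(1 + d_i^-) ≤ 2α · ln(1 + K/α). -/
open scoped BigOperators

open Finset in
private lemma telesc (f : ℕ → ℝ) (m n : ℕ) (h : m ≤ n) :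
    ∑ i ∈ Finset.Ico m n, (f i - f (i+1)) = f m - f n := by
  induction n, h using Nat.le_induction with
  | base => simp
  | succ n hmn ih => rw [Finset.sum_Ico_succ_top hmn, ih]; ring

private lemma key {r : ℝ} (h1 : 1 ≤ r) (h2 : r ≤ 2) : r - 1 ≤ 2 * Real.log r := by
  have hr0 : (0:ℝ) < r := lt_of_lt_of_le one_pos h1
  set s := Real.sqrt r with hsdef
  have hs : s^2 = r := Real.sq_sqrt hr0.le
  have hs1 : 1 ≤ s := by
    rw [hsdef, show (1:ℝ) = Real.sqrt 1 by simp]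
    exact Real.sqrt_le_sqrt h1
  have hs0 : 0 < s := lt_of_lt_of_le one_pos hs1
  have hs2 : s ≤ 3/2 := by nlinarith
  have hlog : Real.log r = 2 * Real.log s := by
    rw [← hs, Real.log_pow]; push_cast; ring
  have hls : 1 - 1/s ≤ Real.log s := by
    have := Real.log_le_sub_one_of_pos (x := 1/s) (by positivity)
    rw [Real.log_div one_ne_zero hs0.ne', Real.log_one] at this
    linarith
  rw [hlog]
  have : r - 1 ≤ 4 * (1 - 1/s) := by
    rw [← hs]
    have h4 : 4*(1 - 1/s) = 4*(s-1)/s := by field_simp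
    rw [h4, le_div_iff₀ hs0]
    nlinarith
  linarith

open Finset in
private lemma greedy {K : ℕ} (D : Fin K → Fin K → Prop) [DecidableRel D]
    (m : ℕ) (S : Finset (Fin K))
    (hdeg : ∀ i ∈ S, (S.filter (fun j => D j i)).card ≤ m) :
    ∃ I : Finset (Fin K), I ⊆ S ∧
      (∀ i ∈ I, ∀ j ∈ I, i ≠ j → ¬ D i j ∧ ¬ D j i) ∧
      S.card ≤ (2*m+1) * I.card := by
  induction S using Finset.strongInduction with
  | _ S ih =>
    rcases S.eq_empty_or_nonempty with rfl | hne
    · exact ⟨∅, by simp⟩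
    · have hsum : ∑ i ∈ S, ((S.filter (fun j => D i j ∨ D j i)).card)
          ≤ ∑ i ∈ S, 2*m := by
        have h1 : ∀ i ∈ S, (S.filter (fun j => D i j ∨ D j i)).card ≤
            (S.filter (fun j => D i j)).card + (S.filter (fun j => D j i)).card := by
          intro i _
          rw [Finset.filter_or]
          exact Finset.card_union_le _ _
        calc ∑ i ∈ S, ((S.filter (fun j => D i j ∨ D j i)).card)
            ≤ ∑ i ∈ S, ((S.filter (fun j => D i j)).card
                + (S.filter (fun j => D j i)).card) := Finset.sum_le_sum h1
          _ = ∑ i ∈ S, (S.filter (fun j => D i j)).card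
                + ∑ i ∈ S, (S.filter (fun j => D j i)).card := Finset.sum_add_distrib
          _ ≤ ∑ i ∈ S, 2*m := by
              have hswap : ∑ i ∈ S, (S.filter (fun j => D i j)).card
                  = ∑ j ∈ S, (S.filter (fun i => D i j)).card := by
                simp only [Finset.card_filter]
                exact Finset.sum_comm
              have h2 : ∑ i ∈ S, (S.filter (fun j => D j i)).card ≤ ∑ i ∈ S, m :=
                Finset.sum_le_sum hdeg
              rw [hswap]
              have h3 := Finset.sum_le_sum (s := S) (fun j hj => hdeg j hj)
              calc (∑ j ∈ S, (S.filter (fun i => D i j)).card)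
                    + ∑ i ∈ S, (S.filter (fun j => D j i)).card
                  ≤ ∑ j ∈ S, m + ∑ i ∈ S, m := Nat.add_le_add h3 h2
                _ = ∑ i ∈ S, 2*m := by rw [← Finset.sum_add_distrib]; ring_nf
      obtain ⟨v, hvS, hv⟩ := Finset.exists_le_of_sum_le hne hsum
      set S' := (S.erase v).filter (fun j => ¬ (D v j ∨ D j v)) with hS'
      have hS'subS : S' ⊆ S := (Finset.filter_subset _ _).trans (Finset.erase_subset _ _)
      have hvnotS' : v ∉ S' := fun h => (Finset.mem_erase.1 (Finset.mem_filter.1 h).1).1 rfl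
      have hssub : S' ⊂ S := Finset.ssubset_iff_of_subset hS'subS |>.2 ⟨v, hvS, hvnotS'⟩
      obtain ⟨I', hI'sub, hI'ind, hI'card⟩ := ih S' hssub
        (fun i hi => le_trans (Finset.card_le_card
          (Finset.filter_subset_filter _ hS'subS)) (hdeg i (hS'subS hi)))
      refine ⟨insert v I', ?_, ?_, ?_⟩
      · exact Finset.insert_subset hvS (hI'sub.trans hS'subS)
      · intro i hi j hj hij
        rcases Finset.mem_insert.1 hi with rfl | hi' <;>
          rcases Finset.mem_insert.1 hj with rfl | hj'
        · exact absurd rfl hij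
        · have := (Finset.mem_filter.1 (hI'sub hj')).2
          push_neg at this
          exact ⟨this.1, this.2⟩
        · have := (Finset.mem_filter.1 (hI'sub hi')).2
          push_neg at this
          exact ⟨this.2, this.1⟩
        · exact hI'ind i hi' j hj' hij
      · have hvI' : v ∉ I' := fun h => hvnotS' (hI'sub h)
        rw [Finset.card_insert_of_notMem hvI']
        have hcard : S.card ≤ S'.card + (2*m+1) := by
          have h1 : (S.erase v).card = S.card - 1 := Finset.card_erase_of_mem hvS
          have h2 : S'.card + ((S.erase v).filter (fun j => (D v j ∨ D j v))).card
              = (S.erase v).card := by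
            rw [hS', add_comm]
            exact Finset.card_filter_add_card_filter_not _
          have h3 : ((S.erase v).filter (fun j => (D v j ∨ D j v))).card
              ≤ (S.filter (fun j => (D v j ∨ D j v))).card :=
            Finset.card_le_card (Finset.filter_subset_filter _ (Finset.erase_subset _ _))
          have h4 : 1 ≤ S.card := Finset.card_pos.2 hne
          omega
        calc S.card ≤ S'.card + (2*m+1) := hcard
          _ ≤ (2*m+1) * I'.card + (2*m+1) := by omega
          _ = (2*m+1) * (I'.card + 1) := by ring

/-- Independence number of (the underlying undirected graph of) a directed graph. -/
noncomputable def indepNum {V : Type*} [Fintype V] (D : V → V → Prop) : ℕ :=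
  sSup {n | ∃ S : Finset V, S.card = n ∧
    ∀ i ∈ S, ∀ j ∈ S, i ≠ j → ¬ D i j ∧ ¬ D j i}

private lemma indep_bdd (K : ℕ) (D : Fin K → Fin K → Prop) :
    BddAbove {n | ∃ S : Finset (Fin K), S.card = n ∧
    ∀ i ∈ S, ∀ j ∈ S, i ≠ j → ¬ D i j ∧ ¬ D j i} := by
  refine ⟨K, fun n hn => ?_⟩
  obtain ⟨S, hc, -⟩ := hn
  simpa [← hc] using (Finset.card_le_univ S).trans_eq (by simp)

private lemma card_le_indep (K : ℕ) (D : Fin K → Fin K → Prop) {S : Finset (Fin K)}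
    (h : ∀ i ∈ S, ∀ j ∈ S, i ≠ j → ¬ D i j ∧ ¬ D j i) :
    S.card ≤ indepNum D :=
  le_csSup (indep_bdd K D) ⟨S, rfl, h⟩

private lemma one_le_indep (K : ℕ) (hK : 1 ≤ K) (D : Fin K → Fin K → Prop) :
    1 ≤ indepNum D := by
  have h1 : ({⟨0, hK⟩} : Finset (Fin K)).card = 1 := rfl
  calc 1 = ({⟨0, hK⟩} : Finset (Fin K)).card := h1.symm
    _ ≤ indepNum D := card_le_indep K D (by simp)

set_option maxHeartbeats 2000000 in
/-- For a directed graph on `K ≥ 1` vertices without self-loops, with in-degrees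
`d_i⁻` and independence number `α`, `∑_i 1/(1 + d_i⁻) ≤ 2 α ln(1 + K/α)`. -/
theorem stmt2 (K : ℕ) (hK : 1 ≤ K) (D : Fin K → Fin K → Prop) [DecidableRel D]
    (hirr : ∀ i, ¬ D i i) :
    ∑ i : Fin K, (1 : ℝ) / (1 + ((Finset.univ.filter (fun j => D j i)).card : ℝ))
      ≤ 2 * (indepNum D : ℝ) * Real.log (1 + (K : ℝ) / (indepNum D : ℝ)) := by
  classical
  set a := indepNum D with ha
  have ha1 : 1 ≤ a := one_le_indep K hK D
  clear_value a
  have ha0 : (0:ℝ) < a := by exact_mod_cast Nat.lt_of_lt_of_le Nat.zero_lt_one ha1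
  have haK : a ≤ K := by
    rw [ha]
    refine csSup_le ⟨0, ∅, by simp⟩ (fun n hn => ?_)
    obtain ⟨S, hc, -⟩ := hn
    simpa [← hc] using (Finset.card_le_univ S).trans_eq (by simp)
  set d : Fin K → ℕ := fun i => (Finset.univ.filter (fun j => D j i)).card with hd
  have hdK : ∀ i, d i + 1 ≤ K := by
    intro i
    have hss : (Finset.univ.filter (fun j => D j i)) ⊂ Finset.univ := by
      refine Finset.filter_ssubset.2 ⟨i, Finset.mem_univ i, hirr i⟩
    have hcc := Finset.card_lt_card hss
    simp only [Finset.card_univ, Fintype.card_fin] at hcc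
    have hdi : d i = (Finset.univ.filter (fun j => D j i)).card := rfl
    omega
  set n : ℕ → ℕ := fun t => (Finset.univ.filter (fun i => d i + 1 ≤ t)).card with hn
  have hnK : ∀ t, n t ≤ K := by
    intro t
    calc n t ≤ Finset.univ.card := Finset.card_le_univ _
      _ = K := by simp
  have hnt : ∀ m : ℕ, n (m+1) ≤ (2*m+1) * a := by
    intro m
    obtain ⟨I, hIsub, hIind, hIcard⟩ := greedy D m
      (Finset.univ.filter (fun i => d i + 1 ≤ m+1))
      (by
        intro i hi
        have h1 : ((Finset.univ.filter (fun i => d i + 1 ≤ m+1)).filter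
            (fun j => D j i)).card ≤ d i :=
          Finset.card_le_card
            (Finset.filter_subset_filter _ (Finset.subset_univ _))
        have h2 := (Finset.mem_filter.1 hi).2
        omega)
    have hle := card_le_indep K D hIind
    rw [← ha] at hle
    exact hIcard.trans (Nat.mul_le_mul_left _ hle)
  -- the basic telescoping function
  set F : ℕ → ℝ := fun t => 1/(t:ℝ) with hF
  set G : ℕ → ℝ := fun t => -Real.log t with hG
  -- per-vertex identity
  have hvert : ∀ i : Fin K, (1:ℝ)/(1 + (d i:ℝ)) =
      (∑ t ∈ Finset.Ico 1 (K+1), if d i + 1 ≤ t then (F t - F (t+1)) else 0)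
        + 1/((K:ℝ)+1) := by
    intro i
    have hs : ∑ t ∈ Finset.Ico 1 (K+1), (if d i + 1 ≤ t then (F t - F (t+1)) else 0)
        = ∑ t ∈ Finset.Ico (d i + 1) (K+1), (F t - F (t+1)) := by
      rw [← Finset.sum_filter]
      congr 1
      ext t
      simp only [Finset.mem_filter, Finset.mem_Ico]
      omega
    rw [hs, telesc F _ _ (by have := hdK i; omega)]
    rw [hF]
    push_cast
    ring
  -- rearranged sum
  have hmain : ∑ i : Fin K, (1:ℝ)/(1 + (d i:ℝ))
      = (∑ t ∈ Finset.Ico 1 (K+1), (n t : ℝ) * (F t - F (t+1))) + (K:ℝ)/((K:ℝ)+1) := by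
    calc ∑ i : Fin K, (1:ℝ)/(1 + (d i:ℝ))
        = ∑ i : Fin K, ((∑ t ∈ Finset.Ico 1 (K+1),
            if d i + 1 ≤ t then (F t - F (t+1)) else 0) + 1/((K:ℝ)+1)) :=
          Finset.sum_congr rfl (fun i _ => hvert i)
      _ = (∑ i : Fin K, ∑ t ∈ Finset.Ico 1 (K+1),
            if d i + 1 ≤ t then (F t - F (t+1)) else 0)
          + ∑ _i : Fin K, 1/((K:ℝ)+1) := Finset.sum_add_distrib
      _ = (∑ t ∈ Finset.Ico 1 (K+1), (n t : ℝ) * (F t - F (t+1))) + (K:ℝ)/((K:ℝ)+1) := by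
          rw [Finset.sum_comm]
          congr 1
          · refine Finset.sum_congr rfl (fun t _ => ?_)
            rw [Finset.sum_ite, Finset.sum_const, Finset.sum_const_zero, add_zero,
              nsmul_eq_mul]
          · rw [Finset.sum_const, Finset.card_univ, Fintype.card_fin, nsmul_eq_mul]
            ring
  have hfin : ∑ i : Fin K, (1:ℝ)/(1 + ((Finset.univ.filter (fun j => D j i)).card:ℝ))
      = ∑ i : Fin K, (1:ℝ)/(1 + (d i:ℝ)) := rfl
  clear_value d n F G
  -- setup for the split
  set x : ℝ := ((a:ℝ) + K)/a with hx
  have hax : (a:ℝ) * x = (a:ℝ) + K := by rw [hx]; field_simp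
  have haKr : (a:ℝ) ≤ K := by exact_mod_cast haK
  have hx2 : 2 ≤ x := by rw [hx, le_div_iff₀ ha0]; linarith
  set N : ℕ := ⌈x/2⌉₊ with hN
  have hN1 : 1 ≤ N := by
    rw [hN]
    exact Nat.one_le_ceil_iff.2 (by linarith)
  have hN0 : (0:ℝ) < N := by exact_mod_cast hN1
  have hxN : x ≤ 2*N := by
    have := Nat.le_ceil (x/2)
    rw [← hN] at this
    linarith
  have hNceil : (N:ℝ) < x/2 + 1 := by
    rw [hN]
    exact Nat.ceil_lt_add_one (by linarith)
  have hNx : (N:ℝ) ≤ x := by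
    rcases eq_or_lt_of_le hN1 with h|h
    · rw [← h]; push_cast; linarith
    · have h2 : (2:ℝ) ≤ N := by exact_mod_cast h
      linarith
  have hNK1 : N ≤ K + 1 := by
    have hxK : x ≤ (K:ℝ) + 1 := by
      rw [hx, div_le_iff₀ ha0]
      have hK1 : (1:ℝ) ≤ K := by exact_mod_cast hK
      have ha1r : (1:ℝ) ≤ a := by exact_mod_cast ha1
      nlinarith [mul_le_mul_of_nonneg_left ha1r (by positivity : (0:ℝ) ≤ (K:ℝ))]
    have hKr : (1:ℝ) ≤ K := by exact_mod_cast hK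
    have : (N:ℝ) < (K:ℝ) + 1 + 1 := by linarith
    have : N < K + 1 + 1 := by exact_mod_cast this
    omega
  have hRHS : (1:ℝ) + (K:ℝ)/a = x := by rw [hx]; field_simp
  clear_value x N
  -- split the sum
  have hsplit : ∑ t ∈ Finset.Ico 1 (K+1), (n t : ℝ) * (F t - F (t+1))
      = (∑ t ∈ Finset.Ico 1 N, (n t : ℝ) * (F t - F (t+1)))
        + ∑ t ∈ Finset.Ico N (K+1), (n t : ℝ) * (F t - F (t+1)) :=
    (Finset.sum_Ico_consecutive _ hN1 hNK1).symm
  -- first part bound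
  have hb1 : ∑ t ∈ Finset.Ico 1 N, (n t : ℝ) * (F t - F (t+1))
      ≤ (a:ℝ) * (2 * Real.log N - (1 - F N)) := by
    have step : ∀ t ∈ Finset.Ico 1 N, (n t : ℝ) * (F t - F (t+1))
        ≤ (a:ℝ) * (2*(G t - G (t+1)) - (F t - F (t+1))) := by
      intro t ht
      have ht1 : 1 ≤ t := (Finset.mem_Ico.1 ht).1
      have htr : (1:ℝ) ≤ t := by exact_mod_cast ht1
      have ht0 : (0:ℝ) < t := by linarith
      have ht10 : (0:ℝ) < (t:ℝ)+1 := by linarith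
      have hFc : F t - F (t+1) = 1/(t:ℝ) - 1/((t:ℝ)+1) := by
        simp only [hF]; push_cast; ring_nf
      have hcpos : 0 ≤ F t - F (t+1) := by
        rw [hFc, sub_nonneg]
        exact one_div_le_one_div_of_le ht0 (by linarith)
      have hnb : (n t : ℝ) ≤ (2*(t:ℝ) - 1) * a := by
        obtain ⟨m, rfl⟩ : ∃ m, t = m + 1 := ⟨t-1, by omega⟩
        have := hnt m
        have : ((n (m+1) : ℝ)) ≤ ((2*m+1 : ℕ) : ℝ) * a := by
          exact_mod_cast Nat.cast_le.2 (hnt m)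
        push_cast at this ⊢
        linarith
      have hGc : G t - G (t+1) = Real.log ((t:ℝ)+1) - Real.log t := by
        simp only [hG]; push_cast; ring
      have hlogb : 1/((t:ℝ)+1) ≤ Real.log ((t:ℝ)+1) - Real.log (t:ℝ) := by
        have hpos : (0:ℝ) < (t:ℝ)/((t:ℝ)+1) := by positivity
        have h := Real.log_le_sub_one_of_pos hpos
        rw [Real.log_div ht0.ne' ht10.ne'] at h
        have heq : (t:ℝ)/((t:ℝ)+1) - 1 = -(1/((t:ℝ)+1)) := by field_simp; ring
        rw [heq] at h
        linarith
      have halg : (2*(t:ℝ) - 1) * (F t - F (t+1)) = 2*(1/((t:ℝ)+1)) - (F t - F (t+1)) := by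
        rw [hFc]
        field_simp
        ring
      calc (n t : ℝ) * (F t - F (t+1))
          ≤ ((2*(t:ℝ) - 1) * a) * (F t - F (t+1)) := mul_le_mul_of_nonneg_right hnb hcpos
        _ = (a:ℝ) * ((2*(t:ℝ) - 1) * (F t - F (t+1))) := by ring
        _ = (a:ℝ) * (2*(1/((t:ℝ)+1)) - (F t - F (t+1))) := by rw [halg]
        _ ≤ (a:ℝ) * (2*(G t - G (t+1)) - (F t - F (t+1))) := by
              rw [hGc]
              have : 2*(1/((t:ℝ)+1)) ≤ 2*(Real.log ((t:ℝ)+1) - Real.log t) := by linarith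
              nlinarith [ha0.le]
    calc ∑ t ∈ Finset.Ico 1 N, (n t : ℝ) * (F t - F (t+1))
        ≤ ∑ t ∈ Finset.Ico 1 N, (a:ℝ) * (2*(G t - G (t+1)) - (F t - F (t+1))) :=
          Finset.sum_le_sum step
      _ = (a:ℝ) * (2*(G 1 - G N) - (F 1 - F N)) := by
          rw [← Finset.mul_sum]
          congr 1
          rw [Finset.sum_sub_distrib, ← Finset.mul_sum,
            telesc G 1 N hN1, telesc F 1 N hN1]
      _ = (a:ℝ) * (2 * Real.log N - (1 - F N)) := by
          simp only [hG, hF]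
          push_cast
          rw [Real.log_one]
          ring
  -- second part bound
  have hb2 : ∑ t ∈ Finset.Ico N (K+1), (n t : ℝ) * (F t - F (t+1))
      ≤ (K:ℝ) * (F N - F (K+1)) := by
    have step : ∀ t ∈ Finset.Ico N (K+1), (n t : ℝ) * (F t - F (t+1))
        ≤ (K:ℝ) * (F t - F (t+1)) := by
      intro t ht
      have ht1 : 1 ≤ t := le_trans hN1 (Finset.mem_Ico.1 ht).1
      have htr : (1:ℝ) ≤ t := by exact_mod_cast ht1
      have ht0 : (0:ℝ) < t := by linarith
      have ht10 : (0:ℝ) < (t:ℝ)+1 := by linarith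
      have hcpos : 0 ≤ F t - F (t+1) := by
        have hFc : F t - F (t+1) = 1/(t:ℝ) - 1/((t:ℝ)+1) := by
          simp only [hF]; push_cast; ring_nf
        rw [hFc, sub_nonneg]
        exact one_div_le_one_div_of_le ht0 (by linarith)
      have hnb : (n t : ℝ) ≤ K := by exact_mod_cast hnK t
      exact mul_le_mul_of_nonneg_right hnb hcpos
    calc ∑ t ∈ Finset.Ico N (K+1), (n t : ℝ) * (F t - F (t+1))
        ≤ ∑ t ∈ Finset.Ico N (K+1), (K:ℝ) * (F t - F (t+1)) := Finset.sum_le_sum step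
      _ = (K:ℝ) * (F N - F (K+1)) := by rw [← Finset.mul_sum, telesc F N (K+1) hNK1]
  -- final comparison
  set r : ℝ := x / N with hr
  have hr1 : 1 ≤ r := by rw [hr, le_div_iff₀ hN0]; linarith
  have hr2 : r ≤ 2 := by rw [hr, div_le_iff₀ hN0]; linarith
  have hkey := key hr1 hr2
  clear_value r
  have hr0 : (0:ℝ) < r := lt_of_lt_of_le one_pos hr1
  have hxNr : x = N * r := by rw [hr]; field_simp
  have hlogx : Real.log x = Real.log N + Real.log r := by
    rw [hxNr, Real.log_mul hN0.ne' hr0.ne']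
  have hFN : F N = 1/(N:ℝ) := by simp only [hF]
  have hFK : F (K+1) = 1/((K:ℝ)+1) := by simp [hF]
  have harN : (a:ℝ) * r = ((a:ℝ) + K)/N := by
    rw [hr, ← hax]; field_simp
  have hgoal : ∑ i : Fin K, (1:ℝ)/(1 + (d i:ℝ))
      ≤ 2 * (a:ℝ) * Real.log x := by
    rw [hmain, hsplit]
    have h1 : (a:ℝ) * (2 * Real.log N - (1 - F N)) + (K:ℝ) * (F N - F (K+1))
        + (K:ℝ)/((K:ℝ)+1) = 2*(a:ℝ)*Real.log N - a + ((a:ℝ)+K)/N := by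
      rw [hFN, hFK]
      field_simp
      ring
    have h2 : ((a:ℝ)+K)/N - a ≤ 2*(a:ℝ)*Real.log r := by
      rw [← harN]
      calc (a:ℝ)*r - a = (a:ℝ)*(r-1) := by ring
        _ ≤ (a:ℝ)*(2*Real.log r) := mul_le_mul_of_nonneg_left hkey ha0.le
        _ = 2*(a:ℝ)*Real.log r := by ring
    calc (∑ t ∈ Finset.Ico 1 N, (n t : ℝ) * (F t - F (t+1)))
          + (∑ t ∈ Finset.Ico N (K+1), (n t : ℝ) * (F t - F (t+1))) + (K:ℝ)/((K:ℝ)+1)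
        ≤ (a:ℝ) * (2 * Real.log N - (1 - F N)) + (K:ℝ) * (F N - F (K+1))
          + (K:ℝ)/((K:ℝ)+1) := by linarith [hb1, hb2]
      _ = 2*(a:ℝ)*Real.log N - a + ((a:ℝ)+K)/N := h1
      _ ≤ 2*(a:ℝ)*Real.log N + 2*(a:ℝ)*Real.log r := by linarith [h2]
      _ = 2 * (a:ℝ) * Real.log x := by rw [hlogx]; ring
  rw [hfin, hRHS]
  exact hgoal
end

section
/- Let G be a directed graph on K vertices with independence number α and domination number γ. The dominating set R produced by the Greedy Set Cover algorithm (repeatedly picking the vertex dominating the largest number of not-yet-dominated vertices, including itself, and removing all vertices it dominates) satisfies |R| ≤ ⌈2α ln K⌉ + 1. -/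
open scoped BigOperators

/-- The set of vertices dominated by `i` : `i` itself together with its out-neighbors. -/
def cover {K : ℕ} (D : Fin K → Fin K → Prop) [DecidableRel D] (i : Fin K) :
    Finset (Fin K) :=
  insert i (Finset.univ.filter fun j => D i j)

lemma turanAux {K : ℕ} (D : Fin K → Fin K → Prop) [DecidableRel D]
    (hirr : ∀ i, ¬ D i i) (c : ℕ) :
    ∀ n (S : Finset (Fin K)), S.card = n → (∀ v ∈ S, (S ∩ cover D v).card ≤ c) →
    ∃ T ⊆ S, (∀ i ∈ T, ∀ j ∈ T, i ≠ j → ¬ D i j ∧ ¬ D j i) ∧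
      S.card ≤ T.card * (2 * c - 1) := by
  intro n
  induction n using Nat.strong_induction_on with
  | _ n ih =>
    intro S hcard hcov
    rcases S.eq_empty_or_nonempty with rfl | hne
    · exact ⟨∅, Finset.Subset.refl _, by simp, by simp⟩
    -- c ≥ 1
    obtain ⟨v0, hv0⟩ := hne
    have hc1 : 1 ≤ c := by
      have : v0 ∈ S ∩ cover D v0 := Finset.mem_inter.2 ⟨hv0, Finset.mem_insert_self _ _⟩
      have := Finset.card_pos.2 ⟨v0, this⟩
      exact le_trans this (hcov v0 hv0)
    -- neighborhood
    set Nb : Fin K → Finset (Fin K) := fun v => S.filter (fun u => u = v ∨ D v u ∨ D u v) with hNb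
    have hNbsub : ∀ v, Nb v ⊆ (S ∩ cover D v) ∪ S.filter (fun u => D u v) := by
      intro v u hu
      rw [hNb] at hu
      simp only [Finset.mem_filter] at hu
      obtain ⟨huS, h⟩ := hu
      rcases h with rfl | hvu | huv
      · exact Finset.mem_union_left _ (Finset.mem_inter.2 ⟨huS, Finset.mem_insert_self _ _⟩)
      · exact Finset.mem_union_left _ (Finset.mem_inter.2 ⟨huS,
          Finset.mem_insert_of_mem (Finset.mem_filter.2 ⟨Finset.mem_univ _, hvu⟩)⟩)
      · exact Finset.mem_union_right _ (Finset.mem_filter.2 ⟨huS, huv⟩)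
    -- out-filter bound
    have hout : ∀ v ∈ S, (S.filter (fun u => D v u)).card ≤ c - 1 := by
      intro v hv
      have hsub : insert v (S.filter (fun u => D v u)) ⊆ S ∩ cover D v := by
        intro u hu
        rcases Finset.mem_insert.1 hu with rfl | hu
        · exact Finset.mem_inter.2 ⟨hv, Finset.mem_insert_self _ _⟩
        · obtain ⟨huS, hD⟩ := Finset.mem_filter.1 hu
          exact Finset.mem_inter.2 ⟨huS,
            Finset.mem_insert_of_mem (Finset.mem_filter.2 ⟨Finset.mem_univ _, hD⟩)⟩
      have hvn : v ∉ S.filter (fun u => D v u) := by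
        simp [hirr v]
      have := Finset.card_le_card hsub
      rw [Finset.card_insert_of_notMem hvn] at this
      have := le_trans this (hcov v hv)
      omega
    -- double counting
    have hdouble : ∑ v ∈ S, (S.filter (fun u => D u v)).card
        = ∑ v ∈ S, (S.filter (fun u => D v u)).card := by
      simp only [Finset.card_filter]
      exact Finset.sum_comm
    have hsum : ∑ v ∈ S, (Nb v).card ≤ ∑ v ∈ S, (2 * c - 1) := by
      calc ∑ v ∈ S, (Nb v).card
          ≤ ∑ v ∈ S, ((S ∩ cover D v).card + (S.filter (fun u => D u v)).card) := by
            apply Finset.sum_le_sum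
            intro v hv
            exact le_trans (Finset.card_le_card (hNbsub v)) (Finset.card_union_le _ _)
        _ = ∑ v ∈ S, (S ∩ cover D v).card + ∑ v ∈ S, (S.filter (fun u => D u v)).card := by
            rw [Finset.sum_add_distrib]
        _ ≤ ∑ v ∈ S, c + ∑ v ∈ S, (c - 1) := by
            apply add_le_add
            · exact Finset.sum_le_sum hcov
            · rw [hdouble]; exact Finset.sum_le_sum hout
        _ = ∑ v ∈ S, (2 * c - 1) := by
            rw [← Finset.sum_add_distrib]
            apply Finset.sum_congr rfl
            intro v _
            omega
    obtain ⟨v, hvS, hvle⟩ := Finset.exists_le_of_sum_le ⟨v0, hv0⟩ hsum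
    have hvNb : v ∈ Nb v := by rw [hNb]; simp [hvS]
    have hNbS : Nb v ⊆ S := Finset.filter_subset _ _
    set S' := S \ Nb v with hS'
    have hS'card : S'.card + (Nb v).card = S.card := Finset.card_sdiff_add_card_eq_card hNbS
    have hlt : S'.card < n := by
      have : 0 < (Nb v).card := Finset.card_pos.2 ⟨v, hvNb⟩
      omega
    have hS'S : S' ⊆ S := Finset.sdiff_subset
    obtain ⟨T', hT'sub, hT'ind, hT'card⟩ := ih S'.card hlt S' rfl (fun u hu => by
      have : S' ∩ cover D u ⊆ S ∩ cover D u :=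
        Finset.inter_subset_inter hS'S (Finset.Subset.refl _)
      exact le_trans (Finset.card_le_card this) (hcov u (hS'S hu)))
    have hvT' : v ∉ T' := fun h => by
      have := hT'sub h
      rw [hS'] at this
      exact (Finset.mem_sdiff.1 this).2 hvNb
    refine ⟨insert v T', ?_, ?_, ?_⟩
    · intro u hu
      rcases Finset.mem_insert.1 hu with rfl | hu
      · exact hvS
      · exact hS'S (hT'sub hu)
    · intro i hi j hj hij
      have key : ∀ u ∈ T', ¬ D v u ∧ ¬ D u v := by
        intro u hu
        have huS' := hT'sub hu
        have huS := hS'S huS'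
        have hnot : u ∉ Nb v := (Finset.mem_sdiff.1 huS').2
        rw [hNb] at hnot
        simp only [Finset.mem_filter, not_and, not_or] at hnot
        exact ⟨(hnot huS).2.1, (hnot huS).2.2⟩
      rcases Finset.mem_insert.1 hi with hiv | hiT
      · rcases Finset.mem_insert.1 hj with hjv | hjT
        · exact absurd (hiv.trans hjv.symm) hij
        · subst hiv; exact key j hjT
      · rcases Finset.mem_insert.1 hj with hjv | hjT
        · subst hjv; exact ⟨(key i hiT).2, (key i hiT).1⟩
        · exact hT'ind i hiT j hjT hij
    · rw [Finset.card_insert_of_notMem hvT']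
      have : S.card = S'.card + (Nb v).card := hS'card.symm
      calc S.card = S'.card + (Nb v).card := this
        _ ≤ T'.card * (2 * c - 1) + (2 * c - 1) := add_le_add hT'card hvle
        _ = (T'.card + 1) * (2 * c - 1) := by ring

/-- The Greedy Set Cover algorithm (at each step pick a vertex dominating the
largest number of not-yet-dominated vertices and remove all vertices it
dominates) terminates within `⌈2 α ln K⌉ + 1` steps, producing a dominating
set of at most that size. -/
theorem stmt3 (K : ℕ) (hK : 1 ≤ K) (D : Fin K → Fin K → Prop) [DecidableRel D]
    (hirr : ∀ i, ¬ D i i)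
    (Vs : ℕ → Finset (Fin K)) (is : ℕ → Fin K)
    (h0 : Vs 0 = Finset.univ)
    (hstep : ∀ s, (Vs s).Nonempty →
      is s ∈ Vs s ∧
      (∀ j ∈ Vs s, ((Vs s) ∩ cover D j).card ≤ ((Vs s) ∩ cover D (is s)).card) ∧
      Vs (s + 1) = Vs s \ cover D (is s)) :
    ∃ s ≤ Nat.ceil (2 * (indepNum D : ℝ) * Real.log K) + 1,
      Vs s = ∅ ∧
      (∀ j : Fin K, j ∉ (Finset.range s).image is →
        ∃ i ∈ (Finset.range s).image is, D i j) := by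
  classical
  set α := indepNum D with hα
  -- the indep set collection is bounded above
  have hbdd : BddAbove {n | ∃ S : Finset (Fin K), S.card = n ∧
      ∀ i ∈ S, ∀ j ∈ S, i ≠ j → ¬ D i j ∧ ¬ D j i} := by
    refine ⟨K, fun n hn => ?_⟩
    obtain ⟨S, hS, -⟩ := hn
    rw [← hS]
    simpa using Finset.card_le_univ S
  have hαle : ∀ T : Finset (Fin K),
      (∀ i ∈ T, ∀ j ∈ T, i ≠ j → ¬ D i j ∧ ¬ D j i) → T.card ≤ α := by
    intro T hT
    exact le_csSup hbdd ⟨T, rfl, hT⟩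
  have hα1 : 1 ≤ α := by
    have : ({⟨0, hK⟩} : Finset (Fin K)).card = 1 := Finset.card_singleton _
    have h := hαle {⟨0, hK⟩} (by
      intro i hi j hj hij
      rw [Finset.mem_singleton] at hi hj
      exact absurd (hi.trans hj.symm) hij)
    omega
  have hA1 : (1 : ℝ) ≤ (α : ℝ) := by exact_mod_cast hα1
  have hA0 : (0 : ℝ) < 2 * α := by linarith
  set r : ℝ := 1 - 1 / (2 * α) with hr
  have hr0 : 0 ≤ r := by
    rw [hr]
    have : 1 / (2 * (α : ℝ)) ≤ 1 := by
      rw [div_le_one hA0]; linarith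
    linarith
  -- single-step decrease
  have hdec : ∀ t, (Vs t).Nonempty → ((Vs (t + 1)).card : ℝ) ≤ r * (Vs t).card := by
    intro t ht
    obtain ⟨hmem, hmax, heq⟩ := hstep t ht
    set c := ((Vs t) ∩ cover D (is t)).card with hc
    have hc1 : 1 ≤ c := by
      have : is t ∈ Vs t ∩ cover D (is t) :=
        Finset.mem_inter.2 ⟨hmem, Finset.mem_insert_self _ _⟩
      exact Finset.card_pos.2 ⟨_, this⟩
    obtain ⟨T, hTsub, hTind, hTcard⟩ := turanAux D hirr c (Vs t).card (Vs t) rfl hmax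
    have hTα : T.card ≤ α := hαle T hTind
    have hkey : (Vs t).card ≤ α * (2 * c - 1) :=
      le_trans hTcard (Nat.mul_le_mul_right _ hTα)
    have hcle : c ≤ (Vs t).card := by
      rw [hc]
      exact Finset.card_le_card (Finset.inter_subset_left)
    have hcards : (Vs (t + 1)).card = (Vs t).card - c := by
      rw [heq]
      have := Finset.card_inter_add_card_sdiff (Vs t) (cover D (is t))
      omega
    have hkeyR : ((Vs t).card : ℝ) ≤ (α : ℝ) * (2 * c - 1) := by
      have h2 : ((α * (2 * c - 1) : ℕ) : ℝ) = (α : ℝ) * (2 * c - 1) := by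
        push_cast [Nat.cast_sub (by omega : 1 ≤ 2 * c)]
        ring
      rw [← h2]
      exact_mod_cast hkey
    have hcR : ((Vs t).card : ℝ) / (2 * α) ≤ c := by
      rw [div_le_iff₀ hA0]
      nlinarith
    rw [hcards]
    rw [Nat.cast_sub hcle, hr]
    have : (1 - 1 / (2 * (α : ℝ))) * (Vs t).card
        = (Vs t).card - (Vs t).card / (2 * α) := by
      field_simp
    rw [this]
    linarith
  -- exponential bound
  have hbound : ∀ t, (∀ u, u < t → (Vs u).Nonempty) → ((Vs t).card : ℝ) ≤ K * r ^ t := by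
    intro t
    induction t with
    | zero => intro _; simp [h0]
    | succ t ih =>
      intro h
      have ht : (Vs t).Nonempty := h t (Nat.lt_succ_self t)
      have h1 := hdec t ht
      have h2 := ih (fun u hu => h u (Nat.lt_succ_of_lt hu))
      calc ((Vs (t + 1)).card : ℝ) ≤ r * (Vs t).card := h1
        _ ≤ r * (K * r ^ t) := by
            exact mul_le_mul_of_nonneg_left h2 hr0
        _ = K * r ^ (t + 1) := by ring
  set N := Nat.ceil (2 * (α : ℝ) * Real.log K) with hN
  -- K * r^N ≤ 1
  have hKr : (K : ℝ) * r ^ N ≤ 1 := by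
    have hK0 : (0 : ℝ) < K := by exact_mod_cast hK
    have hrexp : r ≤ Real.exp (-(1 / (2 * α))) := by
      have := Real.add_one_le_exp (-(1 / (2 * (α : ℝ))))
      rw [hr]; linarith
    have h1 : r ^ N ≤ Real.exp (-(1 / (2 * α))) ^ N :=
      pow_le_pow_left₀ hr0 hrexp N
    have h2 : Real.exp (-(1 / (2 * (α : ℝ)))) ^ N = Real.exp (N * -(1 / (2 * α))) := by
      rw [Real.exp_nat_mul]
    have hle : 2 * (α : ℝ) * Real.log K ≤ N := Nat.le_ceil _
    have h3 : Real.exp ((N : ℝ) * -(1 / (2 * α))) ≤ Real.exp (-(Real.log K)) := by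
      apply Real.exp_le_exp.2
      rw [mul_neg, neg_le_neg_iff, mul_one_div, le_div_iff₀ hA0]
      linarith
    have h4 : Real.exp (-(Real.log K)) = (K : ℝ)⁻¹ := by
      rw [Real.exp_neg, Real.exp_log hK0]
    calc (K : ℝ) * r ^ N ≤ K * Real.exp (-(Real.log K)) := by
          apply mul_le_mul_of_nonneg_left _ (le_of_lt hK0)
          rw [← h2] at h3
          exact le_trans h1 h3
      _ = 1 := by rw [h4]; field_simp
  -- existence of empty stage within N + 1
  have hex : ∃ s ≤ N + 1, Vs s = ∅ := by
    by_cases hall : ∀ u, u ≤ N → (Vs u).Nonempty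
    · have hNb := hbound N (fun u hu => hall u (le_of_lt hu))
      have hNcard : (Vs N).card ≤ 1 := by
        exact_mod_cast le_trans hNb hKr
      have hNne := hall N le_rfl
      have hN1 : (Vs N).card = 1 := le_antisymm hNcard (Finset.card_pos.2 hNne)
      obtain ⟨hmem, -, heq⟩ := hstep N hNne
      have hsing : Vs N = {is N} := by
        obtain ⟨a, ha⟩ := Finset.card_eq_one.1 hN1
        rw [ha] at hmem ⊢
        rw [Finset.mem_singleton] at hmem
        rw [hmem]
      refine ⟨N + 1, le_rfl, ?_⟩
      rw [heq, hsing, Finset.sdiff_eq_empty_iff_subset]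
      exact Finset.singleton_subset_iff.2 (Finset.mem_insert_self _ _)
    · push_neg at hall
      obtain ⟨u, hu, hue⟩ := hall
      exact ⟨u, le_trans hu (Nat.le_succ N), hue⟩
  obtain ⟨s0, hs0, hs0e⟩ := hex
  have hexx : ∃ s, Vs s = ∅ := ⟨s0, hs0e⟩
  set m := Nat.find hexx with hm
  have hme : Vs m = ∅ := Nat.find_spec hexx
  have hmle : m ≤ N + 1 := le_trans (Nat.find_le hs0e) hs0
  have hmne : ∀ t, t < m → (Vs t).Nonempty := by
    intro t ht
    exact Finset.nonempty_iff_ne_empty.2 (Nat.find_min hexx ht)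
  refine ⟨m, hmle, hme, ?_⟩
  intro j hj
  -- j is in Vs 0 but not in Vs m; find the crossing step
  have hstep' : ∀ t, t ≤ m → j ∈ Vs t ∨
      ∃ u < m, j ∈ Vs u ∧ j ∉ Vs (u + 1) := by
    intro t
    induction t with
    | zero => intro _; left; rw [h0]; exact Finset.mem_univ j
    | succ t ih =>
      intro ht
      rcases ih (le_trans (Nat.le_succ t) ht) with hmem | hcross
      · by_cases hj1 : j ∈ Vs (t + 1)
        · left; exact hj1
        · right; exact ⟨t, by omega, hmem, hj1⟩
      · right; exact hcross
  rcases hstep' m le_rfl with hmem | ⟨u, hum, hjin, hjout⟩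
  · rw [hme] at hmem; exact absurd hmem (Finset.notMem_empty j)
  · obtain ⟨-, -, heq⟩ := hstep u (hmne u hum)
    rw [heq, Finset.mem_sdiff] at hjout
    push_neg at hjout
    have hjcov : j ∈ cover D (is u) := hjout hjin
    have hju : j ≠ is u := by
      intro h
      apply hj
      rw [Finset.mem_image]
      exact ⟨u, Finset.mem_range.2 hum, h.symm⟩
    rcases Finset.mem_insert.1 hjcov with h | h
    · exact absurd h hju
    · refine ⟨is u, Finset.mem_image.2 ⟨u, Finset.mem_range.2 hum, rfl⟩,
        (Finset.mem_filter.1 h).2⟩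
end

section
/- Let G = (V,D) be a directed graph on K vertices with independence number α, let R ⊆ V be a dominating set of size r, and let p_1,...,p_K be a probability distribution on V with p_i ≥ β > 0 for all i ∈ R. Then Σ_{i=1}^K p_i/(p_i + Σ_{j:(j,i)∈D} p_j) ≤ 2α · ln(1 + (⌈K²/(rβ)⌉ + K)/α) + 2r. -/
open scoped BigOperators


open scoped BigOperators

lemma caroWei {V : Type*} [DecidableEq V] (adj : V → V → Prop) [DecidableRel adj]
    (hsym : ∀ u v, adj u v → adj v u) :
    ∀ (S : Finset V) (α : ℝ) (w : V → ℝ), (∀ v ∈ S, 0 < w v) → 0 ≤ α →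
      (∀ T ⊆ S, (∀ i ∈ T, ∀ j ∈ T, i ≠ j → ¬ adj i j) → (T.card : ℝ) ≤ α) →
      ∑ v ∈ S, w v / (∑ u ∈ S.filter (fun u => u = v ∨ adj u v), w u) ≤ α := by
  intro S
  induction S using Finset.strongInduction with
  | _ S ih =>
  intro α w hw hα hind
  rcases S.eq_empty_or_nonempty with rfl | hne
  · simpa using hα
  obtain ⟨v, hvS, hmin⟩ := S.exists_min_image
    (fun v => ∑ u ∈ S.filter (fun u => u = v ∨ adj u v), w u) hne
  set WN : V → ℝ := fun v => ∑ u ∈ S.filter (fun u => u = v ∨ adj u v), w u with hWN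
  have hWNpos : ∀ u ∈ S, 0 < WN u := by
    intro u hu
    refine Finset.sum_pos (fun x hx => hw x (Finset.mem_filter.mp hx).1) ⟨u, ?_⟩
    exact Finset.mem_filter.mpr ⟨hu, Or.inl rfl⟩
  set C : Finset V := S.filter (fun u => u = v ∨ adj u v) with hC
  set S' : Finset V := S.filter (fun u => ¬(u = v ∨ adj u v)) with hS'
  have hsplit : ∑ u ∈ C, w u / WN u + ∑ u ∈ S', w u / WN u = ∑ u ∈ S, w u / WN u :=
    Finset.sum_filter_add_sum_filter_not S _ _
  -- part on C
  have hCpart : ∑ u ∈ C, w u / WN u ≤ 1 := by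
    have h1 : ∑ u ∈ C, w u / WN u ≤ ∑ u ∈ C, w u / WN v := by
      refine Finset.sum_le_sum (fun u hu => ?_)
      have huS : u ∈ S := (Finset.mem_filter.mp hu).1
      exact div_le_div_of_nonneg_left (hw u huS).le (hWNpos v hvS) (hmin u huS)
    have h2 : ∑ u ∈ C, w u / WN v = WN v / WN v := by rw [← Finset.sum_div]
    rw [h2, div_self (hWNpos v hvS).ne'] at h1
    exact h1
  -- part on S'
  have hS'sub : S' ⊆ S := Finset.filter_subset _ _
  have hS'ssub : S' ⊂ S := by
    refine Finset.ssubset_iff_of_subset hS'sub |>.mpr ⟨v, hvS, ?_⟩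
    simp [hS']
  have hS'adj : ∀ u ∈ S', ¬ adj u v ∧ u ≠ v := by
    intro u hu
    have := (Finset.mem_filter.mp hu).2
    push_neg at this
    exact ⟨this.2, this.1⟩
  rcases S'.eq_empty_or_nonempty with hS'e | hS'ne
  · have h1α : (1:ℝ) ≤ α := by
      have := hind {v} (by simpa using hvS) (by intro i hi j hj hij; simp at hi hj; subst hi; subst hj; exact absurd rfl hij)
      simpa using this
    rw [← hsplit, hS'e]
    simpa using hCpart.trans h1α
  · -- independent pairs give 2 ≤ α
    obtain ⟨u₀, hu₀⟩ := hS'ne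
    have h2α : (2:ℝ) ≤ α := by
      have hpair := hind {v, u₀} ?_ ?_
      · have hcard : ({v, u₀} : Finset V).card = 2 := by
          rw [Finset.card_insert_of_notMem (by simpa using fun h => (hS'adj u₀ hu₀).2 h.symm), Finset.card_singleton]
        rw [hcard] at hpair; exact_mod_cast hpair
      · intro x hx; simp at hx; rcases hx with rfl | rfl
        · exact hvS
        · exact hS'sub hu₀
      · intro i hi j hj hij
        simp at hi hj
        rcases hi with rfl | rfl <;> rcases hj with rfl | rfl
        · exact absurd rfl hij
        · exact fun h => (hS'adj j hu₀).1 (hsym _ _ h)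
        · exact (hS'adj i hu₀).1
        · exact absurd rfl hij
    have hrec : ∑ u ∈ S', w u / (∑ x ∈ S'.filter (fun x => x = u ∨ adj x u), w x) ≤ α - 1 := by
      refine ih S' hS'ssub (α - 1) w (fun u hu => hw u (hS'sub hu)) (by linarith) ?_
      intro T hT hTind
      have hvT : v ∉ T := fun hvT => ((hS'adj v (hT hvT)).2) rfl
      have := hind (insert v T) ?_ ?_
      · rw [Finset.card_insert_of_notMem hvT] at this
        push_cast at this; linarith
      · intro x hx
        rcases Finset.mem_insert.mp hx with rfl | hx
        · exact hvS
        · exact hS'sub (hT hx)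
      · intro i hi j hj hij
        rcases Finset.mem_insert.mp hi with rfl | hi2 <;> rcases Finset.mem_insert.mp hj with rfl | hj2
        · exact absurd rfl hij
        · exact fun h => (hS'adj j (hT hj2)).1 (hsym _ _ h)
        · exact (hS'adj i (hT hi2)).1
        · exact hTind i hi2 j hj2 hij
    have hmono : ∑ u ∈ S', w u / WN u ≤
        ∑ u ∈ S', w u / (∑ x ∈ S'.filter (fun x => x = u ∨ adj x u), w x) := by
      refine Finset.sum_le_sum (fun u hu => ?_)
      have hpos' : 0 < ∑ x ∈ S'.filter (fun x => x = u ∨ adj x u), w x := by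
        refine Finset.sum_pos (fun x hx => hw x (hS'sub (Finset.mem_filter.mp hx).1)) ⟨u, ?_⟩
        exact Finset.mem_filter.mpr ⟨hu, Or.inl rfl⟩
      refine div_le_div_of_nonneg_left (hw u (hS'sub hu)).le hpos' ?_
      refine Finset.sum_le_sum_of_subset_of_nonneg ?_ (fun x hx _ => (hw x (Finset.mem_filter.mp hx).1).le)
      exact Finset.filter_subset_filter _ hS'sub
    calc ∑ u ∈ S, w u / WN u = ∑ u ∈ C, w u / WN u + ∑ u ∈ S', w u / WN u := hsplit.symm
      _ ≤ 1 + (α - 1) := add_le_add hCpart (hmono.trans hrec)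
      _ = α := by ring

lemma sum_filter_or_le {V : Type*} [DecidableEq V] (S : Finset V) (w : V → ℝ)
    (hw : ∀ v ∈ S, 0 ≤ w v) (P Q : V → Prop) [DecidablePred P] [DecidablePred Q] :
    ∑ u ∈ S.filter (fun u => P u ∨ Q u), w u
      ≤ ∑ u ∈ S.filter P, w u + ∑ u ∈ S.filter Q, w u := by
  classical
  rw [Finset.filter_or]
  have h := Finset.sum_union_inter (s₁ := S.filter P) (s₂ := S.filter Q) (f := w)
  have hnn : 0 ≤ ∑ x ∈ S.filter P ∩ S.filter Q, w x := by
    refine Finset.sum_nonneg (fun x hx => hw x ?_)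
    exact Finset.filter_subset _ _ (Finset.mem_of_mem_inter_left hx)
  linarith

lemma lemA {V : Type*} [DecidableEq V] (E : V → V → Prop) [DecidableRel E]
    (hirr : ∀ v, ¬ E v v) (α ε : ℝ) (hα : 1 ≤ α) (hε : 0 < ε) (w : V → ℝ) :
    ∀ (S : Finset V), (∀ v ∈ S, ε ≤ w v) →
      (∀ T ⊆ S, (∀ i ∈ T, ∀ j ∈ T, i ≠ j → ¬ E i j ∧ ¬ E j i) → (T.card : ℝ) ≤ α) →
      ∑ v ∈ S, w v / (w v + ∑ u ∈ S.filter (fun u => E u v), w u)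
        ≤ 2 * α * Real.log (((∑ v ∈ S, w v) + ε * α) / (ε * α)) := by
  intro S
  induction S using Finset.strongInduction with
  | _ S ih =>
  intro hw hind
  have hαpos : (0:ℝ) < α := by linarith
  have hεα : (0:ℝ) < ε * α := mul_pos hε hαpos
  rcases S.eq_empty_or_nonempty with rfl | hne
  · simp [div_self hεα.ne']
  have hwpos : ∀ v ∈ S, 0 < w v := fun v hv => lt_of_lt_of_le hε (hw v hv)
  set W : ℝ := ∑ v ∈ S, w v with hW
  have hWpos : 0 < W := Finset.sum_pos hwpos hne
  set Win : V → ℝ := fun v => ∑ u ∈ S.filter (fun u => E u v), w u with hWin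
  set Wout : V → ℝ := fun v => ∑ u ∈ S.filter (fun u => E v u), w u with hWout
  set WN : V → ℝ := fun v => ∑ u ∈ S.filter (fun u => u = v ∨ E u v ∨ E v u), w u with hWN
  have hWinnn : ∀ v, 0 ≤ Win v := by
    intro v; refine Finset.sum_nonneg (fun u hu => (hwpos u (Finset.mem_filter.mp hu).1).le)
  have hWNpos : ∀ v ∈ S, 0 < WN v := by
    intro v hv
    refine Finset.sum_pos (fun x hx => hwpos x (Finset.mem_filter.mp hx).1) ⟨v, ?_⟩
    exact Finset.mem_filter.mpr ⟨hv, Or.inl rfl⟩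
  -- Caro-Wei
  have hCW : ∑ v ∈ S, w v / WN v ≤ α := by
    refine caroWei (fun u v => E u v ∨ E v u) (fun u v h => h.symm) S α w hwpos hαpos.le ?_
    intro T hT hTind
    refine hind T hT (fun i hi j hj hij => ?_)
    have := hTind i hi j hj hij
    have := hTind j hj i hi (Ne.symm hij)
    constructor
    · intro h; exact hTind i hi j hj hij (Or.inl h)
    · intro h; exact hTind i hi j hj hij (Or.inr h)
  -- Engel form
  have hCS : W^2 ≤ (∑ v ∈ S, w v * WN v) * α := by
    have h1 := Finset.sq_sum_div_le_sum_sq_div S w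
      (g := fun v => w v * WN v) (fun v hv => mul_pos (hwpos v hv) (hWNpos v hv))
    have h2 : ∑ v ∈ S, (w v)^2 / (w v * WN v) = ∑ v ∈ S, w v / WN v := by
      refine Finset.sum_congr rfl (fun v hv => ?_)
      rw [sq]
      rw [mul_div_mul_left _ _ (hwpos v hv).ne']
    rw [h2] at h1
    have hden : 0 < ∑ v ∈ S, w v * WN v :=
      Finset.sum_pos (fun v hv => mul_pos (hwpos v hv) (hWNpos v hv)) hne
    calc W^2 = (W^2 / (∑ v ∈ S, w v * WN v)) * (∑ v ∈ S, w v * WN v) := by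
            field_simp
      _ ≤ α * (∑ v ∈ S, w v * WN v) := by
            refine mul_le_mul_of_nonneg_right (h1.trans hCW) hden.le
      _ = (∑ v ∈ S, w v * WN v) * α := mul_comm _ _
  -- double counting : ∑ w Wout = ∑ w Win
  have hdc : ∑ v ∈ S, w v * Wout v = ∑ v ∈ S, w v * Win v := by
    have e1 : ∀ v, w v * Wout v = ∑ u ∈ S, (if E v u then w v * w u else 0) := by
      intro v
      rw [hWout]; simp only []
      rw [Finset.mul_sum, Finset.sum_filter]
    have e2 : ∀ v, w v * Win v = ∑ u ∈ S, (if E u v then w v * w u else 0) := by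
      intro v
      rw [hWin]; simp only []
      rw [Finset.mul_sum, Finset.sum_filter]
    calc ∑ v ∈ S, w v * Wout v = ∑ v ∈ S, ∑ u ∈ S, (if E v u then w v * w u else 0) := by
          exact Finset.sum_congr rfl (fun v _ => e1 v)
      _ = ∑ u ∈ S, ∑ v ∈ S, (if E v u then w v * w u else 0) := Finset.sum_comm
      _ = ∑ v ∈ S, ∑ u ∈ S, (if E u v then w v * w u else 0) := by
          refine Finset.sum_congr rfl (fun v _ => Finset.sum_congr rfl (fun u _ => ?_))
          split <;> [rw [mul_comm]; rfl]
      _ = ∑ v ∈ S, w v * Win v := by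
          exact Finset.sum_congr rfl (fun v _ => (e2 v).symm)
  -- WN bound
  have hWNle : ∀ v ∈ S, WN v ≤ w v + Win v + Wout v := by
    intro v hv
    have h1 : WN v ≤ ∑ u ∈ S.filter (fun u => u = v), w u
        + ∑ u ∈ S.filter (fun u => E u v ∨ E v u), w u :=
      sum_filter_or_le S w (fun x hx => (hwpos x hx).le) _ _
    have h2 : ∑ u ∈ S.filter (fun u => E u v ∨ E v u), w u ≤ Win v + Wout v :=
      sum_filter_or_le S w (fun x hx => (hwpos x hx).le) _ _
    have h3 : ∑ u ∈ S.filter (fun u => u = v), w u = w v := by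
      rw [Finset.filter_eq' S v, if_pos hv, Finset.sum_singleton]
    linarith
  -- lower bound on ∑ w (w + Win)
  have hlow : W * ((ε * α + W) / (2 * α)) ≤ ∑ v ∈ S, w v * (w v + Win v) := by
    have hA : ε * W ≤ ∑ v ∈ S, (w v)^2 := by
      calc ε * W = ∑ v ∈ S, ε * w v := by rw [Finset.mul_sum]
        _ ≤ ∑ v ∈ S, (w v)^2 := by
            refine Finset.sum_le_sum (fun v hv => ?_)
            rw [sq]
            exact mul_le_mul_of_nonneg_right (hw v hv) (hwpos v hv).le
    have hC : ∑ v ∈ S, w v * WN v ≤ ∑ v ∈ S, (w v)^2 + 2 * ∑ v ∈ S, w v * Win v := by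
      have : ∑ v ∈ S, w v * WN v ≤ ∑ v ∈ S, (w v * (w v + Win v + Wout v)) := by
        refine Finset.sum_le_sum (fun v hv => mul_le_mul_of_nonneg_left (hWNle v hv) (hwpos v hv).le)
      have expand : ∑ v ∈ S, (w v * (w v + Win v + Wout v))
          = ∑ v ∈ S, (w v)^2 + ∑ v ∈ S, w v * Win v + ∑ v ∈ S, w v * Wout v := by
        rw [← Finset.sum_add_distrib, ← Finset.sum_add_distrib]
        exact Finset.sum_congr rfl (fun v _ => by ring)
      rw [expand, hdc] at this
      linarith
    have hsum : ∑ v ∈ S, w v * (w v + Win v) = ∑ v ∈ S, (w v)^2 + ∑ v ∈ S, w v * Win v := by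
      rw [← Finset.sum_add_distrib]
      exact Finset.sum_congr rfl (fun v _ => by ring)
    have hCS' : W^2 / α ≤ ∑ v ∈ S, w v * WN v := by
      rw [div_le_iff₀ hαpos]; exact hCS
    have key : W * ((ε * α + W) / (2 * α)) = (ε * W + W^2 / α) / 2 := by
      field_simp
    rw [key, hsum]
    linarith
  -- find good vertex
  have hgood : ∃ v ∈ S, (ε * α + W) / (2 * α) ≤ w v + Win v := by
    by_contra hcon
    push_neg at hcon
    have : ∑ v ∈ S, w v * (w v + Win v) < ∑ v ∈ S, w v * ((ε * α + W) / (2 * α)) := by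
      refine Finset.sum_lt_sum_of_nonempty hne (fun v hv => ?_)
      exact mul_lt_mul_of_pos_left (hcon v hv) (hwpos v hv)
    rw [← Finset.sum_mul] at this
    rw [← hW] at this
    linarith
  obtain ⟨v, hvS, hvbig⟩ := hgood
  set S' : Finset V := S.erase v with hS'
  have hS'ssub : S' ⊂ S := Finset.erase_ssubset hvS
  have hS'sub : S' ⊆ S := Finset.erase_subset _ _
  have hW' : ∑ u ∈ S', w u = W - w v := by
    have := Finset.add_sum_erase S w hvS
    rw [← hW] at this; linarith
  have hwvW : w v ≤ W :=
    Finset.single_le_sum (fun u hu => (hwpos u hu).le) hvS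
  -- the key log inequality for the removed vertex
  have hcpos : 0 < (ε * α + W) / (2 * α) := div_pos (by linarith) (by linarith)
  have hterm : w v / (w v + Win v)
      ≤ 2 * α * (Real.log (W + ε * α) - Real.log (W - w v + ε * α)) := by
    have h1 : w v / (w v + Win v) ≤ w v / ((ε * α + W) / (2 * α)) :=
      div_le_div_of_nonneg_left (hwpos v hvS).le hcpos hvbig
    have h2 : w v / ((ε * α + W) / (2 * α)) = 2 * α * (w v / (W + ε * α)) := by
      field_simp; ring
    have h3 : w v / (W + ε * α) ≤ Real.log (W + ε * α) - Real.log (W - w v + ε * α) := by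
      have ha : (0:ℝ) < W + ε * α := by linarith
      have hax : (0:ℝ) < W - w v + ε * α := by linarith
      have hlog := Real.log_le_sub_one_of_pos (div_pos hax ha)
      rw [Real.log_div hax.ne' ha.ne'] at hlog
      have : (W - w v + ε * α) / (W + ε * α) - 1 = - (w v / (W + ε * α)) := by
        field_simp
        ring
      rw [this] at hlog
      linarith
    calc w v / (w v + Win v) ≤ 2 * α * (w v / (W + ε * α)) := by rw [← h2]; exact h1
      _ ≤ 2 * α * (Real.log (W + ε * α) - Real.log (W - w v + ε * α)) := by
          refine mul_le_mul_of_nonneg_left h3 (by linarith)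
  -- recursion
  have hrec : ∑ u ∈ S', w u / (w u + ∑ x ∈ S'.filter (fun x => E x u), w x)
      ≤ 2 * α * Real.log (((W - w v) + ε * α) / (ε * α)) := by
    have := ih S' hS'ssub (fun u hu => hw u (hS'sub hu))
      (fun T hT hTind => hind T (hT.trans hS'sub) hTind)
    rw [hW'] at this
    exact this
  have hmono : ∑ u ∈ S', w u / (w u + Win u)
      ≤ ∑ u ∈ S', w u / (w u + ∑ x ∈ S'.filter (fun x => E x u), w x) := by
    refine Finset.sum_le_sum (fun u hu => ?_)
    have hnn' : 0 ≤ ∑ x ∈ S'.filter (fun x => E x u), w x :=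
      Finset.sum_nonneg (fun x hx => (hwpos x (hS'sub (Finset.mem_filter.mp hx).1)).le)
    have hpos' : 0 < w u + ∑ x ∈ S'.filter (fun x => E x u), w x := by
      have := hwpos u (hS'sub hu); linarith
    refine div_le_div_of_nonneg_left (hwpos u (hS'sub hu)).le hpos' ?_
    have : ∑ x ∈ S'.filter (fun x => E x u), w x ≤ Win u := by
      refine Finset.sum_le_sum_of_subset_of_nonneg (Finset.filter_subset_filter _ hS'sub)
        (fun x hx _ => (hwpos x (Finset.mem_filter.mp hx).1).le)
    linarith
  have hsplit : ∑ u ∈ S, w u / (w u + Win u)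
      = w v / (w v + Win v) + ∑ u ∈ S', w u / (w u + Win u) :=
    (Finset.add_sum_erase S _ hvS).symm
  have hfinal : Real.log ((W + ε * α) / (ε * α))
      = (Real.log (W + ε * α) - Real.log (W - w v + ε * α))
        + Real.log (((W - w v) + ε * α) / (ε * α)) := by
    have ha : (0:ℝ) < W + ε * α := by linarith
    have hax : (0:ℝ) < W - w v + ε * α := by linarith
    rw [Real.log_div ha.ne' hεα.ne', Real.log_div hax.ne' hεα.ne']
    ring_nf
  calc ∑ u ∈ S, w u / (w u + Win u)
      = w v / (w v + Win v) + ∑ u ∈ S', w u / (w u + Win u) := hsplit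
    _ ≤ 2 * α * (Real.log (W + ε * α) - Real.log (W - w v + ε * α))
        + 2 * α * Real.log (((W - w v) + ε * α) / (ε * α)) :=
        add_le_add hterm (hmono.trans hrec)
    _ = 2 * α * Real.log ((W + ε * α) / (ε * α)) := by rw [hfinal]; ring

/-- If `R` is a dominating set of size `r` for a directed graph `G` with
independence number `α`, and `p` is a probability distribution with `p_i ≥ β > 0`
on `R`, then `∑_i p_i/(p_i + ∑_{j:(j,i)∈D} p_j) ≤ 2α ln(1 + (⌈K²/(rβ)⌉ + K)/α) + 2r`. -/
theorem stmt6 (K : ℕ) (hK : 1 ≤ K) (D : Fin K → Fin K → Prop) [DecidableRel D]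
    (hirr : ∀ i, ¬ D i i)
    (R : Finset (Fin K)) (hdom : ∀ i, i ∉ R → ∃ j ∈ R, D j i)
    (β : ℝ) (hβ : 0 < β)
    (p : Fin K → ℝ) (hnn : ∀ i, 0 ≤ p i) (hsum : ∑ i, p i = 1)
    (hplb : ∀ i ∈ R, β ≤ p i) :
    ∑ i : Fin K, p i / (p i + ∑ j ∈ Finset.univ.filter (fun j => D j i), p j)
      ≤ 2 * (indepNum D : ℝ) *
          Real.log (1 + ((Nat.ceil ((K : ℝ) ^ 2 / ((R.card : ℝ) * β)) : ℝ) + (K : ℝ))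
            / (indepNum D : ℝ))
        + 2 * (R.card : ℝ) := by
  classical
  set α : ℝ := (indepNum D : ℝ) with hαdef
  set r : ℝ := (R.card : ℝ) with hrdef
  have hK0 : (0:ℝ) < K := by exact_mod_cast hK
  -- R is nonempty
  have hRne : R.Nonempty := by
    by_contra h
    rw [Finset.not_nonempty_iff_eq_empty] at h
    obtain ⟨j, hj, -⟩ := hdom ⟨0, hK⟩ (by simp [h])
    simp [h] at hj
  have hr1 : (1:ℝ) ≤ r := by
    rw [hrdef]; exact_mod_cast Finset.card_pos.mpr hRne
  -- independence number facts
  have hbdd : BddAbove {n | ∃ S : Finset (Fin K), S.card = n ∧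
      ∀ i ∈ S, ∀ j ∈ S, i ≠ j → ¬ D i j ∧ ¬ D j i} := by
    refine ⟨K, ?_⟩
    rintro n ⟨S, rfl, -⟩
    simpa using Finset.card_le_univ S
  have hind : ∀ T : Finset (Fin K),
      (∀ i ∈ T, ∀ j ∈ T, i ≠ j → ¬ D i j ∧ ¬ D j i) → (T.card : ℝ) ≤ α := by
    intro T hT
    have : T.card ≤ indepNum D := le_csSup hbdd ⟨T, rfl, hT⟩
    rw [hαdef]; exact_mod_cast this
  have hα1 : (1:ℝ) ≤ α := by
    have h1 : 1 ≤ indepNum D := by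
      refine le_csSup hbdd ⟨{⟨0, hK⟩}, by simp, ?_⟩
      intro i hi j hj hij
      simp only [Finset.mem_singleton] at hi hj
      subst hi; subst hj; exact absurd rfl hij
    rw [hαdef]; exact_mod_cast h1
  have hαpos : (0:ℝ) < α := by linarith
  set ε : ℝ := r * β / K^2 with hεdef
  have hεpos : 0 < ε := div_pos (mul_pos (by linarith) hβ) (by positivity)
  clear_value α
  clear_value r
  clear_value ε
  set w : Fin K → ℝ := fun i => p i + ε with hwdef
  have hwε : ∀ i, ε ≤ w i := fun i => by
    have := hnn i; simp only [hwdef]; linarith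
  have hwpos : ∀ i, 0 < w i := fun i => lt_of_lt_of_le hεpos (hwε i)
  -- apply the main lemma
  have hmain := lemA D hirr α ε hα1 hεpos w Finset.univ (fun v _ => hwε v)
    (fun T _ hT => hind T hT)
  -- compute total weight
  have hWtot : ∑ v : Fin K, w v = 1 + K * ε := by
    simp only [hwdef]
    rw [Finset.sum_add_distrib, hsum, Finset.sum_const, Finset.card_univ, Fintype.card_fin,
      nsmul_eq_mul]
  rw [hWtot] at hmain
  -- notation
  set Pin : Fin K → ℝ := fun i => ∑ j ∈ Finset.univ.filter (fun j => D j i), p j with hPin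
  set Winw : Fin K → ℝ := fun i => ∑ j ∈ Finset.univ.filter (fun j => D j i), w j with hWinw
  have hPinnn : ∀ i, 0 ≤ Pin i :=
    fun i => Finset.sum_nonneg (fun j _ => hnn j)
  have hWinnn : ∀ i, 0 ≤ Winw i :=
    fun i => Finset.sum_nonneg (fun j _ => (hwpos j).le)
  have hdeg : ∀ i : Fin K, ((Finset.univ.filter (fun j => D j i)).card : ℝ) + 1 ≤ K := by
    intro i
    have hsub : Finset.univ.filter (fun j => D j i) ⊆ Finset.univ.erase i := by
      intro j hj
      rcases Finset.mem_filter.mp hj with ⟨-, hDji⟩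
      refine Finset.mem_erase.mpr ⟨?_, Finset.mem_univ j⟩
      exact fun h => hirr i (h ▸ hDji)
    have := Finset.card_le_card hsub
    rw [Finset.card_erase_of_mem (Finset.mem_univ i), Finset.card_univ, Fintype.card_fin] at this
    have h2 : (Finset.univ.filter (fun j => D j i)).card + 1 ≤ K := by omega
    exact_mod_cast h2
  have hWinweq : ∀ i, Winw i = Pin i + ((Finset.univ.filter (fun j => D j i)).card : ℝ) * ε := by
    intro i
    simp only [hWinw, hwdef, hPin]
    rw [Finset.sum_add_distrib, Finset.sum_const, nsmul_eq_mul]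
  -- per-vertex comparison for i ∉ R
  have hcomp : ∀ i ∉ R, p i / (p i + Pin i) ≤ w i / (w i + Winw i) + r / K := by
    intro i hiR
    obtain ⟨j₀, hj₀R, hj₀D⟩ := hdom i hiR
    have hPβ : β ≤ Pin i := by
      refine le_trans (hplb j₀ hj₀R) ?_
      refine Finset.single_le_sum (f := p) (fun j _ => hnn j) ?_
      exact Finset.mem_filter.mpr ⟨Finset.mem_univ _, hj₀D⟩
    set Dn : ℝ := p i + Pin i with hDn
    have hDnβ : β ≤ Dn := by have := hnn i; simp only [hDn]; linarith
    have hDnpos : 0 < Dn := lt_of_lt_of_le hβ hDnβ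
    have hKε : 0 < K * ε := mul_pos hK0 hεpos
    have hrK : K * ε / β = r / K := by
      rw [hεdef]
      field_simp
    -- step 1
    have hstep1 : p i / Dn ≤ p i / (Dn + K * ε) + K * ε / β := by
      have e1 : p i / Dn - p i / (Dn + K * ε) = p i * (K * ε) / (Dn * (Dn + K * ε)) := by
        field_simp; ring
      have hpiDn : p i ≤ Dn := by have := hPinnn i; simp only [hDn]; linarith
      have e2 : p i * (K * ε) / (Dn * (Dn + K * ε)) ≤ K * ε / β := by
        have hDD : 0 < Dn * (Dn + K * ε) := mul_pos hDnpos (by linarith)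
        have c1 : p i * (K * ε) / (Dn * (Dn + K * ε)) ≤ Dn * (K * ε) / (Dn * (Dn + K * ε)) :=
          (div_le_div_iff_of_pos_right hDD).mpr (mul_le_mul_of_nonneg_right hpiDn hKε.le)
        have c2 : Dn * (K * ε) / (Dn * (Dn + K * ε)) = K * ε / (Dn + K * ε) :=
          mul_div_mul_left _ _ hDnpos.ne'
        have c3 : K * ε / (Dn + K * ε) ≤ K * ε / β :=
          div_le_div_of_nonneg_left hKε.le hβ (by linarith)
        linarith
      linarith
    -- step 2
    have hstep2 : p i / (Dn + K * ε) ≤ w i / (w i + Winw i) := by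
      have hden : w i + Winw i ≤ Dn + K * ε := by
        rw [hWinweq i]
        have := hdeg i
        have h3 : (1 + ((Finset.univ.filter (fun j => D j i)).card : ℝ)) * ε ≤ K * ε :=
          mul_le_mul_of_nonneg_right (by linarith) hεpos.le
        simp only [hwdef, hDn]
        nlinarith [hεpos.le]
      have hdpos : 0 < w i + Winw i := by have := hwpos i; have := hWinnn i; linarith
      refine div_le_div₀ (hwpos i).le ?_ hdpos hden
      simp only [hwdef]; linarith [hεpos.le]
    calc p i / (p i + Pin i) = p i / Dn := rfl
      _ ≤ p i / (Dn + K * ε) + K * ε / β := hstep1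
      _ ≤ w i / (w i + Winw i) + K * ε / β := by linarith [hstep2]
      _ = w i / (w i + Winw i) + r / K := by rw [hrK]
  -- sum over R
  have hRpart : ∑ i ∈ R, p i / (p i + Pin i) ≤ r := by
    calc ∑ i ∈ R, p i / (p i + Pin i) ≤ ∑ i ∈ R, 1 := by
          refine Finset.sum_le_sum (fun i hi => ?_)
          have hpi : 0 < p i := lt_of_lt_of_le hβ (hplb i hi)
          have h1 : p i ≤ p i + Pin i := by have := hPinnn i; linarith
          exact div_le_one_of_le₀ h1 (by linarith [hPinnn i])
      _ = r := by simp [hrdef]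
  have hterms_nonneg : ∀ i, (0:ℝ) ≤ w i / (w i + Winw i) := fun i =>
    div_nonneg (hwpos i).le (by have := hwpos i; have := hWinnn i; linarith)
  have hKrK : (K:ℝ) * (r / K) = r := by field_simp [hK0.ne']
  have hCpart : ∑ i ∈ Rᶜ, p i / (p i + Pin i)
      ≤ (∑ i : Fin K, w i / (w i + Winw i)) + r := by
    calc ∑ i ∈ Rᶜ, p i / (p i + Pin i) ≤ ∑ i ∈ Rᶜ, (w i / (w i + Winw i) + r / K) :=
          Finset.sum_le_sum (fun i hi => hcomp i (Finset.mem_compl.mp hi))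
      _ = ∑ i ∈ Rᶜ, w i / (w i + Winw i) + (Rᶜ.card : ℝ) * (r / K) := by
          rw [Finset.sum_add_distrib, Finset.sum_const, nsmul_eq_mul]
      _ ≤ (∑ i : Fin K, w i / (w i + Winw i)) + (K:ℝ) * (r / K) := by
          refine add_le_add ?_ ?_
          · exact Finset.sum_le_sum_of_subset_of_nonneg (Finset.subset_univ _)
              (fun i _ _ => hterms_nonneg i)
          · refine mul_le_mul_of_nonneg_right ?_ (by positivity)
            have hc : (Rᶜ.card : ℕ) ≤ K := by simpa using Finset.card_le_univ Rᶜ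
            exact_mod_cast hc
      _ = (∑ i : Fin K, w i / (w i + Winw i)) + r := by rw [hKrK]
  have hlogle : Real.log ((1 + K * ε + ε * α) / (ε * α)) ≤
      Real.log (1 + ((Nat.ceil ((K : ℝ)^2 / (r * β)) : ℝ) + K) / α) := by
    have hεα : (0:ℝ) < ε * α := mul_pos hεpos hαpos
    have hKε' : 0 < (K:ℝ) * ε := mul_pos hK0 hεpos
    refine Real.log_le_log (div_pos (by linarith) hεα) ?_
    have harg : (1 + K * ε + ε * α) / (ε * α) = 1 + (1/ε + K) / α := by
      field_simp [hεpos.ne', hαpos.ne']; ring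
    rw [harg]
    have hceil : (1:ℝ)/ε = (K:ℝ)^2 / (r * β) := by
      rw [hεdef, one_div_div]
    have h2 : (1:ℝ)/ε ≤ (Nat.ceil ((K : ℝ)^2 / (r * β)) : ℝ) := by
      rw [hceil]; exact Nat.le_ceil _
    have h3 : (1/ε + K) / α ≤ ((Nat.ceil ((K : ℝ)^2 / (r * β)) : ℝ) + K) / α :=
      (div_le_div_iff_of_pos_right hαpos).mpr (by linarith)
    linarith
  calc ∑ i : Fin K, p i / (p i + Pin i)
      = ∑ i ∈ R, p i / (p i + Pin i) + ∑ i ∈ Rᶜ, p i / (p i + Pin i) :=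
        (Finset.sum_add_sum_compl R _).symm
    _ ≤ r + ((∑ i : Fin K, w i / (w i + Winw i)) + r) := add_le_add hRpart hCpart
    _ ≤ r + (2 * α * Real.log ((1 + K * ε + ε * α) / (ε * α)) + r) := by
        refine add_le_add_right (add_le_add_left ?_ r) r
        exact hmain
    _ ≤ 2 * α * Real.log (1 + ((Nat.ceil ((K:ℝ)^2 / (r * β)) : ℝ) + K) / α) + 2 * r := by
        have hh := mul_le_mul_of_nonneg_left hlogle (by linarith : (0:ℝ) ≤ 2 * α)
        linarith
end

section
/- Let G = (V,D) be a directed graph on V = {1,...,K}, where each vertex is considered an in-neighbor of itself. If s = (s_1,...,s_K) maximizes min_{i∈V} Σ_{j: j→i} s_j over the probability simplex, then max_{i∈V} 1/(Σ_{j: j→i} s_j) ≤ mas(G), the size of a maximum induced acyclic subgraph of G. -/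
open scoped BigOperators

section Aux

variable {K : ℕ} {D : Fin K → Fin K → Prop}

lemma mas_bddAbove (D : Fin K → Fin K → Prop) :
    BddAbove {n | ∃ S : Finset (Fin K), S.card = n ∧ AcyclicOn D S} := by
  refine ⟨K, ?_⟩
  rintro n ⟨S, rfl, -⟩
  simpa using Finset.card_le_card (Finset.subset_univ S)

lemma acyclic_singleton (hirr : ∀ i, ¬ D i i) (v : Fin K) :
    AcyclicOn D ({v} : Finset (Fin K)) := by
  intro n f hmem harc
  exfalso
  have h0 := harc 0
  have h1 : f (0 : Fin (n+1)).castSucc = v := Finset.mem_singleton.mp (hmem _)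
  have h2 : f (0 : Fin (n+1)).succ = v := Finset.mem_singleton.mp (hmem _)
  rw [h1, h2] at h0
  exact hirr v h0

lemma exists_max_acyclic (hirr : ∀ i, ¬ D i i) (hne : (Finset.univ : Finset (Fin K)).Nonempty) :
    ∃ S : Finset (Fin K), S.card = mas D ∧ AcyclicOn D S := by
  obtain ⟨v, -⟩ := hne
  have hset : (1 : ℕ) ∈ {n | ∃ S : Finset (Fin K), S.card = n ∧ AcyclicOn D S} :=
    ⟨{v}, Finset.card_singleton v, acyclic_singleton hirr v⟩
  have hmem := Nat.sSup_mem ⟨1, hset⟩ (mas_bddAbove D)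
  exact hmem

lemma mas_pos (hirr : ∀ i, ¬ D i i) (hne : (Finset.univ : Finset (Fin K)).Nonempty) :
    1 ≤ mas D := by
  obtain ⟨v, -⟩ := hne
  exact le_csSup (mas_bddAbove D) ⟨{v}, Finset.card_singleton v, acyclic_singleton hirr v⟩

/-- A maximum acyclic set in-dominates every vertex. -/
lemma max_acyclic_dominates (hirr : ∀ i, ¬ D i i)
    (S : Finset (Fin K)) (hcard : S.card = mas D) (hacy : AcyclicOn D S) (i : Fin K) :
    ∃ j ∈ S, j = i ∨ D j i := by
  by_cases hi : i ∈ S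
  · exact ⟨i, hi, Or.inl rfl⟩
  · -- `insert i S` is not acyclic (it would exceed `mas D`)
    have hnot : ¬ AcyclicOn D (insert i S) := by
      intro h
      have hc : (insert i S).card = mas D + 1 := by
        rw [Finset.card_insert_of_notMem hi, hcard]
      have : mas D + 1 ≤ mas D :=
        le_csSup (mas_bddAbove D) ⟨insert i S, hc, h⟩
      omega
    rw [AcyclicOn] at hnot
    push_neg at hnot
    obtain ⟨n, f, hmem, harc, hcyc⟩ := hnot
    -- some vertex of the cycle equals i
    have hex : ∃ k : Fin (n + 2), f k = i := by
      by_contra hx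
      push_neg at hx
      have hmemS : ∀ k, f k ∈ S := by
        intro k
        rcases Finset.mem_insert.mp (hmem k) with h | h
        · exact absurd h (hx k)
        · exact h
      exact hacy n f hmemS harc hcyc
    obtain ⟨k, hk⟩ := hex
    -- find an arc entering i
    have key : ∃ m : Fin (n + 1), f m.succ = i := by
      by_cases hlast : f (Fin.last (n + 1)) = i
      · exact ⟨Fin.last n, by rwa [Fin.succ_last]⟩
      · have hk0 : k ≠ 0 := by
          intro h
          apply hlast
          rw [← hcyc, ← hk, h]
        exact ⟨k.pred hk0, by rwa [Fin.succ_pred]⟩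
    obtain ⟨m, hm⟩ := key
    refine ⟨f m.castSucc, ?_, Or.inr ?_⟩
    · have harcm := harc m
      rw [hm] at harcm
      rcases Finset.mem_insert.mp (hmem m.castSucc) with h | h
      · exact absurd (h ▸ harcm) (hirr i)
      · exact h
    · have harcm := harc m
      rwa [hm] at harcm

end Aux

/-- If `s` maximizes `min_i ∑_{j : j→i} s_j` (where `j → i` means `j = i` or
`(j,i) ∈ D`) over the probability simplex, then
`max_i 1/∑_{j→i} s_j ≤ mas(G)`, i.e. `∑_{j→i} s_j ≥ 1/mas(G)` for every `i`. -/
theorem stmt7 (K : ℕ) (D : Fin K → Fin K → Prop) [DecidableRel D]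
    (hirr : ∀ i, ¬ D i i)
    (hne : (Finset.univ : Finset (Fin K)).Nonempty)
    (s : Fin K → ℝ) (hnn : ∀ i, 0 ≤ s i) (hsum : ∑ i, s i = 1)
    (hopt : ∀ s' : Fin K → ℝ, (∀ i, 0 ≤ s' i) → (∑ i, s' i = 1) →
      Finset.univ.inf' hne (fun i : Fin K =>
          s' i + ∑ j ∈ Finset.univ.filter (fun j => D j i), s' j)
        ≤ Finset.univ.inf' hne (fun i : Fin K =>
          s i + ∑ j ∈ Finset.univ.filter (fun j => D j i), s j)) :
    ∀ i : Fin K,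
      (1 : ℝ) / (mas D : ℝ)
        ≤ s i + ∑ j ∈ Finset.univ.filter (fun j => D j i), s j := by
  obtain ⟨S, hScard, hSacy⟩ := exists_max_acyclic hirr hne
  have hm1 : 1 ≤ mas D := mas_pos hirr hne
  have hcpos : (0 : ℝ) < (mas D : ℝ) := by exact_mod_cast hm1
  set c : ℝ := (mas D : ℝ) with hc
  -- the uniform distribution on S
  set t : Fin K → ℝ := fun j => if j ∈ S then c⁻¹ else 0 with ht
  have htnn : ∀ j, 0 ≤ t j := by
    intro j; simp only [ht]
    split <;> positivity
  have htsum : ∑ j, t j = 1 := by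
    simp only [ht]
    rw [Finset.sum_ite_mem, Finset.univ_inter, Finset.sum_const, hScard, nsmul_eq_mul]
    field_simp
    exact hc.symm
  have hlb : ∀ i : Fin K,
      c⁻¹ ≤ t i + ∑ j ∈ Finset.univ.filter (fun j => D j i), t j := by
    intro i
    obtain ⟨j, hjS, hj⟩ := max_acyclic_dominates hirr S hScard hSacy i
    have hjval : t j = c⁻¹ := by simp [ht, hjS]
    rcases hj with rfl | hji
    · have : (0:ℝ) ≤ ∑ j' ∈ Finset.univ.filter (fun j' => D j' j), t j' :=
        Finset.sum_nonneg fun j' _ => htnn j'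
      rw [hjval] at *
      linarith
    · have hjf : j ∈ Finset.univ.filter (fun j' => D j' i) := by
        simp [hji]
      have : t j ≤ ∑ j' ∈ Finset.univ.filter (fun j' => D j' i), t j' :=
        Finset.single_le_sum (fun j' _ => htnn j') hjf
      have := htnn i
      linarith [hjval ▸ ‹t j ≤ _›]
  have hinf : c⁻¹ ≤ Finset.univ.inf' hne (fun i : Fin K =>
      t i + ∑ j ∈ Finset.univ.filter (fun j => D j i), t j) :=
    Finset.le_inf' hne _ fun i _ => hlb i
  have hinf2 : c⁻¹ ≤ Finset.univ.inf' hne (fun i : Fin K =>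
      s i + ∑ j ∈ Finset.univ.filter (fun j => D j i), s j) :=
    le_trans hinf (hopt t htnn htsum)
  intro i
  rw [one_div]
  exact le_trans hinf2 (Finset.inf'_le _ (Finset.mem_univ i))
end

section
/- In any directed graph, the vertex set of a maximal (with respect to inclusion) induced acyclic subgraph is a dominating set; consequently the domination number γ(G) is at most mas(G). -/
open scoped BigOperators

/-- Domination number: minimum size of a set `R` such that every vertex outside
`R` has an in-neighbor in `R`. -/
noncomputable def domNum {V : Type*} [Fintype V] (D : V → V → Prop) : ℕ :=
  sInf {n | ∃ R : Finset V, R.card = n ∧ ∀ i, i ∉ R → ∃ j ∈ R, D j i}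

/-- The vertex set of a maximal induced acyclic subgraph is a dominating set;
consequently `γ(G) ≤ mas(G)`. -/
theorem stmt8 (K : ℕ) (D : Fin K → Fin K → Prop) (hirr : ∀ i, ¬ D i i)
    (M : Finset (Fin K)) (hacyc : AcyclicOn D M)
    (hmax : ∀ j ∉ M, ¬ AcyclicOn D (insert j M)) :
    (∀ j ∉ M, ∃ i ∈ M, D i j) ∧ domNum D ≤ mas D := by
  have hdom : ∀ j ∉ M, ∃ i ∈ M, D i j := by
    intro j hj
    have h := hmax j hj
    unfold AcyclicOn at h
    push_neg at h
    obtain ⟨n, f, hS, hD, hcyc⟩ := h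
    -- j appears somewhere in the cycle
    have hjsome : ∃ m : Fin (n + 2), f m = j := by
      by_contra hno
      push_neg at hno
      exact hacyc n f (fun k => by
        rcases Finset.mem_insert.mp (hS k) with h | h
        · exact absurd h (hno k)
        · exact h) hD hcyc
    obtain ⟨m, hm⟩ := hjsome
    -- choose an occurrence with m ≠ 0
    have hpos : ∃ m : Fin (n + 2), f m = j ∧ m ≠ 0 := by
      by_cases h0 : m = 0
      · exact ⟨Fin.last (n + 1), by rw [← hcyc, ← h0, hm], by
          simp [Fin.ext_iff]⟩
      · exact ⟨m, hm, h0⟩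
    obtain ⟨m', hm', hm'0⟩ := hpos
    obtain ⟨k, rfl⟩ := Fin.eq_succ_of_ne_zero hm'0
    have hDk := hD k
    rw [hm'] at hDk
    rcases Finset.mem_insert.mp (hS k.castSucc) with h | h
    · rw [h] at hDk; exact absurd hDk (hirr j)
    · exact ⟨f k.castSucc, h, hDk⟩
  refine ⟨hdom, ?_⟩
  have h1 : domNum D ≤ M.card := Nat.sInf_le ⟨M, rfl, hdom⟩
  have h2 : M.card ≤ mas D := by
    apply le_csSup
    · refine ⟨Fintype.card (Fin K), ?_⟩
      rintro n ⟨S, rfl, -⟩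
      exact Finset.card_le_univ S
    · exact ⟨M, rfl, hacyc⟩
  exact h1.trans h2
end

section
/- Fix a directed graph G = (V,D) on V = {1,...,K} (each vertex an in-neighbor of itself), a probability distribution p on V, and a vertex i with in-degree d_i^- (not counting the self-loop). If f is a uniformly random permutation of V, then the expectation of p_{f(i)} / Σ_{j : j→i} p_{f(j)} equals 1/(1 + d_i^-). -/
open scoped BigOperators

/-- For a uniformly random permutation `f` of the vertices, the expectation of
`p_{f(i)} / ∑_{j : j→i} p_{f(j)}` equals `1/(1 + d_i⁻)`, where `d_i⁻` is the
in-degree of `i` and `j → i` means `j = i` or `(j,i) ∈ D`. -/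
theorem stmt9 (K : ℕ) (D : Fin K → Fin K → Prop) [DecidableRel D]
    (hirr : ∀ i, ¬ D i i)
    (p : Fin K → ℝ) (hpos : ∀ i, 0 < p i) (hsum : ∑ i, p i = 1)
    (i : Fin K) :
    (∑ f : Equiv.Perm (Fin K),
        p (f i) / (p (f i) + ∑ j ∈ Finset.univ.filter (fun j => D j i), p (f j)))
      / (Nat.factorial K : ℝ)
    = 1 / (1 + ((Finset.univ.filter (fun j => D j i)).card : ℝ)) := by
  classical
  set S := Finset.univ.filter (fun j => D j i) with hS
  have hiS : i ∉ S := by simp [hS, hirr i]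
  set T := insert i S with hT
  have hcardT : (T.card : ℝ) = 1 + (S.card : ℝ) := by
    rw [hT, Finset.card_insert_of_notMem hiS]; push_cast; ring
  have hTpos : (0 : ℝ) < T.card := by
    rw [hcardT]; positivity
  have hdenom : ∀ f : Equiv.Perm (Fin K),
      p (f i) + ∑ j ∈ S, p (f j) = ∑ j ∈ T, p (f j) := by
    intro f; rw [hT, Finset.sum_insert hiS]
  have hposT : ∀ f : Equiv.Perm (Fin K), 0 < ∑ j ∈ T, p (f j) := by
    intro f
    exact Finset.sum_pos (fun j _ => hpos _) ⟨i, Finset.mem_insert_self i S⟩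
  have key : ∀ j0 ∈ T,
      (∑ f : Equiv.Perm (Fin K), p (f j0) / ∑ j ∈ T, p (f j))
      = ∑ f : Equiv.Perm (Fin K), p (f i) / ∑ j ∈ T, p (f j) := by
    intro j0 hj0
    have hswapT : ∀ j ∈ T, Equiv.swap i j0 j ∈ T := by
      intro j hj
      rcases eq_or_ne j i with rfl | hji
      · simpa [Equiv.swap_apply_left] using hj0
      rcases eq_or_ne j j0 with rfl | hjj0
      · rw [Equiv.swap_apply_right]; exact Finset.mem_insert_self i S
      · rwa [Equiv.swap_apply_of_ne_of_ne hji hjj0]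
    have hmem : ∀ j : Fin K, j ∈ T ↔ Equiv.swap i j0 j ∈ T := by
      intro j
      constructor
      · exact hswapT j
      · intro h
        have := hswapT _ h
        simpa using this
    have hcomp := Equiv.sum_comp (Equiv.mulRight (Equiv.swap i j0))
      (fun f : Equiv.Perm (Fin K) => p (f i) / ∑ j ∈ T, p (f j))
    rw [← hcomp]
    refine Finset.sum_congr rfl ?_
    intro f _
    have h1 : (Equiv.mulRight (Equiv.swap i j0) f) i = f j0 := by
      simp [Equiv.Perm.mul_apply]
    have h2 : ∑ j ∈ T, p ((Equiv.mulRight (Equiv.swap i j0) f) j)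
        = ∑ j ∈ T, p (f j) := by
      refine Finset.sum_equiv (Equiv.swap i j0) hmem ?_
      intro j hj
      simp [Equiv.Perm.mul_apply]
    simp only [h1] at *
    rw [h2]
  have hone : ∀ f : Equiv.Perm (Fin K),
      ∑ j0 ∈ T, p (f j0) / ∑ j ∈ T, p (f j) = 1 := by
    intro f
    rw [← Finset.sum_div, div_self (ne_of_gt (hposT f))]
  have hmain : (T.card : ℝ) * ∑ f : Equiv.Perm (Fin K), p (f i) / ∑ j ∈ T, p (f j)
      = (Nat.factorial K : ℝ) := by
    calc (T.card : ℝ) * ∑ f : Equiv.Perm (Fin K), p (f i) / ∑ j ∈ T, p (f j)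
        = ∑ j0 ∈ T, ∑ f : Equiv.Perm (Fin K), p (f j0) / ∑ j ∈ T, p (f j) := by
          rw [Finset.sum_congr rfl key, Finset.sum_const, nsmul_eq_mul]
      _ = ∑ f : Equiv.Perm (Fin K), ∑ j0 ∈ T, p (f j0) / ∑ j ∈ T, p (f j) :=
          Finset.sum_comm
      _ = ∑ _f : Equiv.Perm (Fin K), (1 : ℝ) := Finset.sum_congr rfl (fun f _ => hone f)
      _ = (Nat.factorial K : ℝ) := by
          simp [Finset.card_univ, Fintype.card_perm]
  have hfac : (Nat.factorial K : ℝ) ≠ 0 := by positivity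
  have hsumval : (∑ f : Equiv.Perm (Fin K), p (f i) / ∑ j ∈ T, p (f j))
      = (Nat.factorial K : ℝ) / T.card := by
    field_simp [ne_of_gt hTpos] at hmain ⊢
    linarith [hmain]
  simp only [hdenom]
  rw [hsumval, ← hcardT]
  field_simp
end

section
/- Let G be a directed graph on V = {1,...,K} (with self-loops implicit) and p a probability distribution on V with q_i := Σ_{j→i} p_j > 0 for all i, satisfying Σ_i p_i/q_i ≤ M. Then Σ_{i=1}^K p_i (Σ_{j : i→j} p_j/q_j)² ≤ M. -/
open scoped BigOperators

/-- For a probability distribution `p` with `q_i := ∑_{j→i} p_j > 0` for all `i`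
and `∑_i p_i/q_i ≤ M`, one has `∑_i p_i (∑_{j : i→j} p_j/q_j)² ≤ M`. -/
theorem stmt14 (K : ℕ) (D : Fin K → Fin K → Prop) [DecidableRel D]
    (hirr : ∀ i, ¬ D i i)
    (M : ℝ) (hM : 0 < M)
    (p : Fin K → ℝ) (hpnn : ∀ i, 0 ≤ p i) (hpsum : ∑ i, p i = 1)
    (q : Fin K → ℝ)
    (hq : ∀ i, q i = p i + ∑ j ∈ Finset.univ.filter (fun j => D j i), p j)
    (hqpos : ∀ i, 0 < q i)
    (h1 : ∑ i : Fin K, p i / q i ≤ M) :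
    ∑ i : Fin K, p i *
        (∑ j ∈ Finset.univ.filter (fun j => j = i ∨ D i j), p j / q j) ^ 2
      ≤ M := by
  set S : Fin K → ℝ := fun i => ∑ j ∈ Finset.univ.filter (fun j => j = i ∨ D i j), p j / q j
    with hS
  set T : ℝ := ∑ j : Fin K, p j / q j with hT
  have hratnn : ∀ j, 0 ≤ p j / q j := fun j => div_nonneg (hpnn j) (hqpos j).le
  have hSnn : ∀ i, 0 ≤ S i := fun i => Finset.sum_nonneg fun j _ => hratnn j
  have hSle : ∀ i, S i ≤ T := fun i =>
    Finset.sum_le_sum_of_subset_of_nonneg (Finset.subset_univ _)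
      (fun j _ _ => hratnn j)
  have hTnn : 0 ≤ T := Finset.sum_nonneg fun j _ => hratnn j
  -- key identity: ∑ i, p i * S i = 1
  have hqsum : ∀ j : Fin K, ∑ i ∈ Finset.univ.filter (fun i => j = i ∨ D i j), p i = q j := by
    intro j
    have hset : (Finset.univ.filter (fun i => j = i ∨ D i j))
        = insert j (Finset.univ.filter (fun i => D i j)) := by
      ext i
      simp [Finset.mem_insert, eq_comm]
    rw [hset, Finset.sum_insert (by simp [hirr j]), hq j]
  have key : ∑ i, p i * S i = 1 := by
    have : ∑ i, p i * S i
        = ∑ j : Fin K, (p j / q j) * ∑ i ∈ Finset.univ.filter (fun i => j = i ∨ D i j), p i := by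
      simp only [hS, Finset.mul_sum, Finset.sum_filter]
      rw [Finset.sum_comm]
      congr 1
      ext j
      congr 1
      ext i
      split <;> ring
    rw [this]
    have : ∀ j : Fin K, (p j / q j) * ∑ i ∈ Finset.univ.filter (fun i => j = i ∨ D i j), p i
        = p j := by
      intro j
      rw [hqsum j, div_mul_cancel₀]
      exact (hqpos j).ne'
    simp_rw [this]
    exact hpsum
  calc ∑ i, p i * S i ^ 2 ≤ ∑ i, p i * (S i * T) := by
        apply Finset.sum_le_sum
        intro i _
        have : S i ^ 2 ≤ S i * T := by
          rw [sq]
          exact mul_le_mul_of_nonneg_left (hSle i) (hSnn i)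
        exact mul_le_mul_of_nonneg_left this (hpnn i)
    _ = T * ∑ i, p i * S i := by rw [Finset.mul_sum]; congr 1; ext i; ring
    _ = T := by rw [key, mul_one]
    _ ≤ M := h1
end

section
/- Let G be a directed graph on V = {1,...,K} (with self-loops implicit), and p, s probability distributions with q_i := Σ_{j→i} p_j, Σ_i p_i/q_i ≤ M, max_i 1/(Σ_{j→i} s_j) ≤ M, p_i ≥ γ s_i for all i, γ > 0. Then Σ_{i=1}^K p_i (Σ_{j : i→j} p_j/q_j²)² ≤ M³/γ. -/
open scoped BigOperators

/-- If `∑_i p_i/q_i ≤ M`, `max_i 1/∑_{j→i} s_j ≤ M` and `p_i ≥ γ s_i` for all `i`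
(with `q_i := ∑_{j→i} p_j` and `j → i` meaning `j = i` or `(j,i) ∈ D`), then
`∑_i p_i (∑_{j : i→j} p_j/q_j²)² ≤ M³/γ`. -/
theorem stmt16 (K : ℕ) (D : Fin K → Fin K → Prop) [DecidableRel D]
    (hirr : ∀ i, ¬ D i i)
    (M γ : ℝ) (hM : 0 < M) (hγ : 0 < γ)
    (p s : Fin K → ℝ)
    (hpnn : ∀ i, 0 ≤ p i) (hpsum : ∑ i, p i = 1)
    (hsnn : ∀ i, 0 ≤ s i) (hssum : ∑ i, s i = 1)
    (q : Fin K → ℝ)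
    (hq : ∀ i, q i = p i + ∑ j ∈ Finset.univ.filter (fun j => D j i), p j)
    (h1 : ∑ i : Fin K, p i / q i ≤ M)
    (h2 : ∀ i : Fin K,
      1 ≤ M * (s i + ∑ j ∈ Finset.univ.filter (fun j => D j i), s j))
    (h3 : ∀ i, γ * s i ≤ p i) :
    ∑ i : Fin K, p i *
        (∑ j ∈ Finset.univ.filter (fun j => j = i ∨ D i j), p j / (q j) ^ 2) ^ 2
      ≤ M ^ 3 / γ := by
  set A : Fin K → ℝ := fun i => ∑ j ∈ Finset.univ.filter (fun j => j = i ∨ D i j), p j / (q j) ^ 2 with hA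
  have hqlb : ∀ j, γ / M ≤ q j := by
    intro j
    have hs : γ * (s j + ∑ k ∈ Finset.univ.filter (fun k => D k j), s k) ≤ q j := by
      rw [hq, mul_add, Finset.mul_sum]
      exact add_le_add (h3 j) (Finset.sum_le_sum fun k _ => h3 k)
    have h2j := h2 j
    rw [div_le_iff₀ hM]
    nlinarith [mul_le_mul_of_nonneg_left h2j hγ.le, mul_le_mul_of_nonneg_left hs hM.le]
  have hqpos : ∀ j, 0 < q j := fun j => lt_of_lt_of_le (div_pos hγ hM) (hqlb j)
  have hinvq : ∀ j, (q j)⁻¹ ≤ M / γ := by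
    intro j
    have h := inv_anti₀ (div_pos hγ hM) (hqlb j)
    rwa [inv_div] at h
  have hsum2 : ∑ j, p j / q j ^ 2 ≤ M ^ 2 / γ := by
    have hterm : ∀ j : Fin K, p j / q j ^ 2 ≤ (p j / q j) * (M / γ) := by
      intro j
      rw [sq, ← div_div, div_eq_mul_inv (p j / q j)]
      exact mul_le_mul_of_nonneg_left (hinvq j) (div_nonneg (hpnn j) (hqpos j).le)
    calc ∑ j, p j / q j ^ 2 ≤ ∑ j, (p j / q j) * (M / γ) := Finset.sum_le_sum fun j _ => hterm j
      _ = (∑ j, p j / q j) * (M / γ) := (Finset.sum_mul _ _ _).symm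
      _ ≤ M * (M / γ) := mul_le_mul_of_nonneg_right h1 (div_nonneg hM.le hγ.le)
      _ = M ^ 2 / γ := by ring
  have hswap : ∑ i, p i * A i = ∑ j, p j / q j := by
    calc ∑ i, p i * A i
        = ∑ i : Fin K, ∑ j : Fin K, if j = i ∨ D i j then p i * (p j / q j ^ 2) else 0 := by
          refine Finset.sum_congr rfl fun i _ => ?_
          rw [hA, Finset.mul_sum, Finset.sum_filter]
      _ = ∑ j : Fin K, ∑ i : Fin K, if j = i ∨ D i j then p i * (p j / q j ^ 2) else 0 :=
          Finset.sum_comm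
      _ = ∑ j, (p j / q j ^ 2) * q j := by
          refine Finset.sum_congr rfl fun j _ => ?_
          rw [← Finset.sum_filter]
          have hset : Finset.univ.filter (fun i => j = i ∨ D i j)
              = insert j (Finset.univ.filter (fun i => D i j)) := by
            ext i
            simp [eq_comm, or_comm]
          rw [hset, Finset.sum_insert (by simp [hirr j]), hq, ← Finset.sum_mul]
          ring
      _ = ∑ j, p j / q j := by
          refine Finset.sum_congr rfl fun j _ => ?_
          have h0 := (hqpos j).ne'
          field_simp
  have hAnn : ∀ i, 0 ≤ A i := fun i =>
    Finset.sum_nonneg fun j _ => div_nonneg (hpnn j) (sq_nonneg _)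
  have hAub : ∀ i, A i ≤ M ^ 2 / γ := fun i =>
    le_trans (Finset.sum_le_sum_of_subset_of_nonneg (Finset.filter_subset _ _)
      (fun j _ _ => div_nonneg (hpnn j) (sq_nonneg _))) hsum2
  calc ∑ i, p i * A i ^ 2
      ≤ ∑ i, (p i * A i) * (M ^ 2 / γ) := by
        refine Finset.sum_le_sum fun i _ => ?_
        rw [sq, ← mul_assoc]
        exact mul_le_mul_of_nonneg_left (hAub i) (mul_nonneg (hpnn i) (hAnn i))
    _ = (∑ i, p i * A i) * (M ^ 2 / γ) := (Finset.sum_mul _ _ _).symm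
    _ ≤ M * (M ^ 2 / γ) := by
        rw [hswap]
        exact mul_le_mul_of_nonneg_right h1 (div_nonneg (sq_nonneg M) hγ.le)
    _ = M ^ 3 / γ := by ring
end
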